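/- arXiv:0707.1404 — 12 statements merged into one kernel-verified Lean document; each statement's English description precedes it below -/
import Mathlib

section
/- Let r be a left exact preradical on the category of right B-modules arising as the right adjoint of the inclusion of a closed subcategory C. If r is an exact functor, then r(M) = M·a for every right B-module M, where a = r(B) is a two-sided ideal of B. -/
/-!
Statement 0. Let `r` be the left exact preradical on the category of (right) `B`-modules
arising as the right adjoint of the inclusion of a closed subcategory `C` (so `r M` is the
largest submodule of `M` belonging to `C`).  If `r` is an exact functor, then
`r M = M·a` for every `B`-module `M`, where `a = r B` is a two-sided ideal of `B`.
(Formalized for left modules; the statement for right `B`-modules is the mirror image,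
obtained by replacing `B` with its opposite ring.)
-/

universe u

open DirectSum

/-- A closed subcategory of the category of `B`-modules: a class of modules
closed under isomorphisms, submodules, quotients and arbitrary direct sums. -/
structure ClosedSubcategory (B : Type u) [Ring B] : Type (u + 1) where
  Mem : ∀ (M : Type u) [AddCommGroup M] [Module B M], Prop
  mem_congr : ∀ {M N : Type u} [AddCommGroup M] [Module B M] [AddCommGroup N] [Module B N],
    (M ≃ₗ[B] N) → Mem M → Mem N
  mem_submodule : ∀ {M : Type u} [AddCommGroup M] [Module B M] (N : Submodule B M),
    Mem M → Mem N
  mem_quotient : ∀ {M : Type u} [AddCommGroup M] [Module B M] (N : Submodule B M),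
    Mem M → Mem (M ⧸ N)
  mem_directSum : ∀ {ι : Type u} (M : ι → Type u) [∀ i, AddCommGroup (M i)]
    [∀ i, Module B (M i)], (∀ i, Mem (M i)) → Mem (⨁ i, M i)

/-- The submodule `a•M` of `M` (the mirror of `M·a` for right modules). -/
def idealSMul {B : Type u} [Ring B] (a : Ideal B) (M : Type u) [AddCommGroup M]
    [Module B M] : Submodule B M :=
  Submodule.span B {z : M | ∃ x ∈ a, ∃ m : M, z = x • m}

theorem stmt0 {B : Type u} [Ring B] (C : ClosedSubcategory B)
    (r : ∀ (M : Type u) [AddCommGroup M] [Module B M], Submodule B M)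
    (hmem : ∀ (M : Type u) [AddCommGroup M] [Module B M], C.Mem (r M))
    (hmax : ∀ (M : Type u) [AddCommGroup M] [Module B M] (N : Submodule B M),
      C.Mem N → N ≤ r M)
    -- `r` is an exact functor (for a left exact preradical this is equivalent to
    -- preservation of epimorphisms):
    (hexact : ∀ {M N : Type u} [AddCommGroup M] [Module B M] [AddCommGroup N] [Module B N]
      (f : M →ₗ[B] N), Function.Surjective f → (r M).map f = r N) :
    -- `a = r B` is a two-sided ideal of `B` and `r M = a • M` for every module `M`.
    (∀ x ∈ r B, ∀ b : B, x * b ∈ r B) ∧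
      ∀ (M : Type u) [AddCommGroup M] [Module B M], r M = idealSMul (r B) M := by

  classical
  have hrange : ∀ {P N : Type u} [AddCommGroup P] [Module B P] [AddCommGroup N] [Module B N]
      (g : P →ₗ[B] N), C.Mem P → C.Mem (LinearMap.range g) := by
    intro P N _ _ _ _ g hP
    exact C.mem_congr g.quotKerEquivRange (C.mem_quotient _ hP)
  have hsmul : ∀ (M : Type u) [AddCommGroup M] [Module B M] (x : B), x ∈ r B →
      ∀ m : M, x • m ∈ r M := by
    intro M _ _ x hx m
    have h := hrange ((LinearMap.toSpanSingleton B M m).comp (r B).subtype) (hmem B)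
    have hle := hmax M _ h
    exact hle ⟨⟨x, hx⟩, rfl⟩
  constructor
  · intro x hx b
    simpa using hsmul B x hx b
  · intro M _ _
    apply le_antisymm
    · set F := ⨁ (_ : M), B with hF
      let π : F →ₗ[B] M := DirectSum.toModule B M M (fun m => LinearMap.toSpanSingleton B M m)
      have hπ : Function.Surjective π := by
        intro m
        refine ⟨DirectSum.lof B M (fun _ => B) m 1, ?_⟩
        rw [DirectSum.toModule_lof]
        simp
      intro y hy
      rw [← hexact π hπ] at hy
      obtain ⟨z, hz, rfl⟩ := hy
      have hcomp : ∀ i : M, z i ∈ r B := by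
        intro i
        have hs : Function.Surjective (DirectSum.component B M (fun _ => B) i) := by
          intro b
          exact ⟨DirectSum.lof B M (fun _ => B) i b, by simp⟩
        rw [← hexact _ hs]
        exact ⟨z, hz, rfl⟩
      have hzsum := DirectSum.sum_support_of z
      rw [← hzsum, map_sum]
      apply Submodule.sum_mem
      intro i _
      have hterm : π (DirectSum.of (fun _ : M => B) i (z i)) = (z i) • i := by
        have : DirectSum.of (fun _ : M => B) i (z i)
            = DirectSum.lof B M (fun _ => B) i (z i) := rfl
        rw [this, DirectSum.toModule_lof]
        simp
      rw [hterm]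
      exact Submodule.subset_span ⟨z i, hcomp i, i, rfl⟩
    · rw [idealSMul, Submodule.span_le]
      rintro _ ⟨x, hx, m, rfl⟩
      exact hsmul M x hx m
end

section
/- Let r be the preradical associated to a closed subcategory of Mod-B and a = r(B). If r is exact, then a is an idempotent ideal (a² = a) and the quotient ring B/a is flat as a left B-module. -/
/-!
Statement 1.  Let `r` be the preradical associated to a closed subcategory of the
category of (right) `B`-modules and `a = r B`.  If `r` is exact, then `a` is an
idempotent ideal (`a² = a`) and the quotient `B/a` is flat as a module on the other
side.  (Formalized for left modules: the mirror of "`B/a` is flat as a *left*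
`B`-module" is "`B/a` is flat as a *right* `B`-module", i.e. as a left module over
`Bᵐᵒᵖ`; flatness over a possibly noncommutative ring is expressed by the standard
equational criterion.)
-/

universe u

open DirectSum

/-- Flatness of a left `R`-module `M` over a (possibly noncommutative) ring `R`,
via the equational criterion: every relation `∑ xᵢ • nᵢ = 0` factors trivially. -/
def EquationallyFlat (R : Type*) [Ring R] (M : Type*) [AddCommGroup M] [Module R M] : Prop :=
  ∀ (n : ℕ) (x : Fin n → R) (m : Fin n → M), (∑ i, x i • m i) = 0 →
    ∃ (k : ℕ) (b : Fin n → Fin k → R) (m' : Fin k → M),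
      (∀ i, m i = ∑ j, b i j • m' j) ∧ ∀ j, (∑ i, x i * b i j) = 0

/-- The ideal of `Bᵐᵒᵖ` generated by the image of an ideal `a` of `B`; when `a` is
two-sided this is precisely the opposite of `a`, and `Bᵐᵒᵖ ⧸ opIdeal a` is `B/a`
viewed as a right `B`-module. -/
def opIdeal {B : Type u} [Ring B] (a : Ideal B) : Ideal Bᵐᵒᵖ :=
  Submodule.span Bᵐᵒᵖ (MulOpposite.op '' (a : Set B))

section Aux

variable {B : Type u} [Ring B] (C : ClosedSubcategory B)
  (r : ∀ (M : Type u) [AddCommGroup M] [Module B M], Submodule B M)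
  (hmem : ∀ (M : Type u) [AddCommGroup M] [Module B M], C.Mem (r M))
  (hmax : ∀ (M : Type u) [AddCommGroup M] [Module B M] (N : Submodule B M),
      C.Mem N → N ≤ r M)

include hmem hmax

/-- Functoriality of the preradical. -/
theorem aux_map {M N : Type u} [AddCommGroup M] [Module B M] [AddCommGroup N] [Module B N]
    (f : M →ₗ[B] N) : (r M).map f ≤ r N := by
  apply hmax
  have h1 : C.Mem (r M) := hmem M
  have h2 : C.Mem (↥(r M) ⧸ LinearMap.ker (f.comp (r M).subtype)) := C.mem_quotient _ h1
  have hr : LinearMap.range (f.comp (r M).subtype) = (r M).map f := by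
    rw [LinearMap.range_comp, Submodule.range_subtype]
  exact C.mem_congr ((f.comp (r M).subtype).quotKerEquivRange.trans
    (LinearEquiv.ofEq _ _ hr)) h2

/-- The preradical commutes with isomorphisms. -/
theorem aux_iso {M N : Type u} [AddCommGroup M] [Module B M] [AddCommGroup N] [Module B N]
    (e : M ≃ₗ[B] N) : (r M).map (e : M →ₗ[B] N) = r N := by
  refine le_antisymm (aux_map C r hmem hmax _) ?_
  intro x hx
  have h1 : e.symm x ∈ r M :=
    aux_map C r hmem hmax (e.symm : N →ₗ[B] M) (Submodule.mem_map_of_mem hx)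
  exact ⟨e.symm x, h1, by simp⟩

variable (hexact : ∀ {M N : Type u} [AddCommGroup M] [Module B M] [AddCommGroup N] [Module B N]
      (f : M →ₗ[B] N), Function.Surjective f → (r M).map f = r N)

include hexact

/-- The key claim: if `∑ yᵢ xᵢ ∈ a = r B`, then `y` decomposes as `k + c` where
`k` is a syzygy of `x` and `c` has all entries in `a`. -/
theorem aux_claim (n : ℕ) (x y : Fin n → B) (hy : (∑ i, y i * x i) ∈ r B) :
    ∃ k c : Fin n → B, (∀ i, c i ∈ r B) ∧ (∑ i, k i * x i) = 0 ∧ y = k + c := by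
  classical
  set lam : (Fin n → B) →ₗ[B] B :=
    { toFun := fun v => ∑ i, v i * x i
      map_add' := by
        intro v w
        simp [add_mul, Finset.sum_add_distrib]
      map_smul' := by
        intro c v
        simp [Finset.mul_sum, mul_assoc] } with hlam
  have hlamy : lam y = ∑ i, y i * x i := rfl
  set K := LinearMap.ker lam with hK
  -- `⟨lam y, _⟩` lies in `r (range lam)`
  have hmemrange : (⟨lam y, LinearMap.mem_range_self lam y⟩ : ↥(LinearMap.range lam)) ∈
      r ↥(LinearMap.range lam) := by
    have hle1 : r B ⊓ LinearMap.range lam ≤ LinearMap.range lam := inf_le_right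
    have hle2 : r B ⊓ LinearMap.range lam ≤ r B := inf_le_left
    have hmemN : C.Mem ↥(Submodule.comap (LinearMap.range lam).subtype
        (r B ⊓ LinearMap.range lam)) := by
      have m1 : C.Mem ↥(Submodule.comap (r B).subtype (r B ⊓ LinearMap.range lam)) :=
        C.mem_submodule _ (hmem B)
      exact C.mem_congr ((Submodule.comapSubtypeEquivOfLe hle2).trans
        (Submodule.comapSubtypeEquivOfLe hle1).symm) m1
    refine hmax _ _ hmemN ?_
    have : lam y ∈ r B ⊓ LinearMap.range lam := ⟨by rw [hlamy]; exact hy,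
      LinearMap.mem_range_self lam y⟩
    simpa [Submodule.mem_comap] using this
  -- transport to the quotient
  have hQK := aux_iso C r hmem hmax (lam.quotKerEquivRange.symm)
  have hmky : (Submodule.Quotient.mk y : (Fin n → B) ⧸ K) ∈ r ((Fin n → B) ⧸ K) := by
    rw [← hQK]
    refine ⟨⟨lam y, LinearMap.mem_range_self lam y⟩, hmemrange, ?_⟩
    rw [LinearEquiv.coe_coe, LinearEquiv.symm_apply_eq]
    rfl
  -- exactness: the quotient's radical is the image of the radical
  have hsurj : Function.Surjective K.mkQ := Submodule.mkQ_surjective K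
  have hQ : (r (Fin n → B)).map K.mkQ = r ((Fin n → B) ⧸ K) := hexact K.mkQ hsurj
  rw [← hQ] at hmky
  obtain ⟨v, hv, hqv⟩ := hmky
  refine ⟨y - v, v, ?_, ?_, by abel⟩
  · -- every coordinate of an element of `r (Fin n → B)` lies in `r B`
    intro i
    have : v i ∈ (r (Fin n → B)).map (LinearMap.proj i : (Fin n → B) →ₗ[B] B) :=
      ⟨v, hv, rfl⟩
    exact aux_map C r hmem hmax _ this
  · have hker : y - v ∈ K := by
      have : (Submodule.Quotient.mk (y - v) : (Fin n → B) ⧸ K) = 0 := by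
        rw [Submodule.Quotient.mk_sub]
        rw [show (Submodule.Quotient.mk v : (Fin n → B) ⧸ K) = Submodule.Quotient.mk y from hqv]
        simp
      exact (Submodule.Quotient.mk_eq_zero K).mp this
    have := (LinearMap.mem_ker).mp hker
    simpa [hlam] using this

omit hexact in
/-- `r B` is a two-sided ideal. -/
theorem aux_right {w : B} (hw : w ∈ r B) (b : B) : w * b ∈ r B := by
  have h := aux_map C r hmem hmax (LinearMap.toSpanSingleton B B b)
    (Submodule.mem_map_of_mem (f := LinearMap.toSpanSingleton B B b) hw)
  simpa [LinearMap.toSpanSingleton, smul_eq_mul] using h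

end Aux

/-- Membership in `opIdeal a` for a two-sided ideal `a`. -/
theorem opIdeal_mem {B : Type u} [Ring B] (a : Ideal B) (ha : ∀ w ∈ a, ∀ b, w * b ∈ a)
    (u : Bᵐᵒᵖ) : u ∈ opIdeal a ↔ u.unop ∈ a := by
  constructor
  · intro hu
    refine Submodule.span_induction ?_ ?_ ?_ ?_ hu
    · rintro z ⟨w, hw, rfl⟩
      simpa using hw
    · simp
    · intro z w _ _ hz hw
      simpa using a.add_mem hz hw
    · intro c z _ hz
      have : (c • z).unop = z.unop * c.unop := rfl
      rw [this]
      exact ha _ hz _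
  · intro h
    exact Submodule.subset_span ⟨u.unop, h, by simp⟩

theorem stmt1 {B : Type u} [Ring B] (C : ClosedSubcategory B)
    (r : ∀ (M : Type u) [AddCommGroup M] [Module B M], Submodule B M)
    (hmem : ∀ (M : Type u) [AddCommGroup M] [Module B M], C.Mem (r M))
    (hmax : ∀ (M : Type u) [AddCommGroup M] [Module B M] (N : Submodule B M),
      C.Mem N → N ≤ r M)
    (hexact : ∀ {M N : Type u} [AddCommGroup M] [Module B M] [AddCommGroup N] [Module B N]
      (f : M →ₗ[B] N), Function.Surjective f → (r M).map f = r N) :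
    -- `a = r B` is idempotent: `a² = a` ...
    Submodule.span B {z : B | ∃ u ∈ r B, ∃ v ∈ r B, z = u * v} = r B ∧
      -- ... and `B/a` is flat on the other side.
      EquationallyFlat Bᵐᵒᵖ (Bᵐᵒᵖ ⧸ opIdeal (r B)) := by
  classical
  have ha2 : ∀ w ∈ r B, ∀ b : B, w * b ∈ r B := fun w hw b => aux_right C r hmem hmax hw b
  constructor
  · -- idempotence
    apply le_antisymm
    · rw [Submodule.span_le]
      rintro z ⟨u, hu, v, hv, rfl⟩
      exact (r B).smul_mem u hv
    · intro w hw
      obtain ⟨k, c, hc, hk, hkc⟩ := aux_claim C r hmem hmax hexact 1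
        (fun _ => w) (fun _ => 1) (by simpa using hw)
      have h1 : (1 : B) = k 0 + c 0 := congrFun hkc 0
      have hk0 : k 0 * w = 0 := by simpa using hk
      have hww : w = c 0 * w := by
        calc w = 1 * w := (one_mul w).symm
          _ = (k 0 + c 0) * w := by rw [← h1]
          _ = c 0 * w := by rw [add_mul, hk0, zero_add]
      rw [hww]
      exact Submodule.subset_span ⟨c 0, hc 0, w, hw, rfl⟩
  · -- flatness
    intro n x m hm
    choose z hz using fun i => Submodule.Quotient.mk_surjective (opIdeal (r B)) (m i)
    have hsum : (∑ i, x i * z i) ∈ opIdeal (r B) := by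
      have h0 : (Submodule.Quotient.mk (∑ i, x i * z i) : Bᵐᵒᵖ ⧸ opIdeal (r B)) = 0 := by
        have : (∑ i, x i • (Submodule.Quotient.mk (z i) : Bᵐᵒᵖ ⧸ opIdeal (r B))) = 0 := by
          simpa [hz] using hm
        rw [← this, ← Submodule.mkQ_apply, map_sum]
        simp only [Submodule.mkQ_apply, ← Submodule.Quotient.mk_smul, smul_eq_mul]
      exact (Submodule.Quotient.mk_eq_zero _).mp h0
    have hw : (∑ i, (z i).unop * (x i).unop) ∈ r B := by
      have := (opIdeal_mem (r B) ha2 _).mp hsum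
      simpa using this
    obtain ⟨k, c, hc, hk, hkc⟩ := aux_claim C r hmem hmax hexact n
      (fun i => (x i).unop) (fun i => (z i).unop) hw
    refine ⟨1, fun i _ => MulOpposite.op (k i), fun _ => Submodule.Quotient.mk 1, ?_, ?_⟩
    · intro i
      rw [← hz i]
      rw [Fin.sum_univ_one]
      rw [← Submodule.Quotient.mk_smul]
      rw [Submodule.Quotient.eq]
      rw [opIdeal_mem (r B) ha2]
      have : (z i - MulOpposite.op (k i) • (1 : Bᵐᵒᵖ)).unop = (z i).unop - k i := by
        simp
      rw [this]
      have hci : (z i).unop - k i = c i := by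
        have h := congrFun hkc i
        simp only [Pi.add_apply] at h
        rw [h]
        abel
      rw [hci]
      exact hc i
    · intro j
      have h1 : ∀ i, x i * MulOpposite.op (k i) = MulOpposite.op (k i * (x i).unop) :=
        fun i => by rw [MulOpposite.op_mul, MulOpposite.op_unop]
      calc (∑ i, x i * MulOpposite.op (k i))
          = ∑ i, MulOpposite.op (k i * (x i).unop) :=
            Finset.sum_congr rfl fun i _ => h1 i
        _ = MulOpposite.op (∑ i, k i * (x i).unop) := by simp
        _ = 0 := by rw [hk]; simp
end

section
/- Let a be an idempotent two-sided ideal of a ring B such that B/a is flat as a left B-module. Then the multiplication map a ⊗_B a → a is an isomorphism of B-bimodules. -/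
/-!
Statement 3.  Let `a` be an idempotent two-sided ideal of a ring `B` such that `B/a`
is flat as a left `B`-module.  Then the multiplication map `a ⊗_B a → a` is an
isomorphism of `B`-bimodules.

Since Mathlib's tensor product is only available over commutative rings, the balanced
tensor product `a ⊗_B a` is realized as the quotient of `a ⊗_ℤ a` by the subgroup of
balancing relations `xb ⊗ y - x ⊗ by`; the statement that multiplication induces an
isomorphism `a ⊗_B a ≅ a` is expressed by saying that the multiplication map
`μ : a ⊗_ℤ a → B` has image exactly `a` and kernel exactly the span of the balancing
relations.  (Bimodule-linearity of the induced map is automatic, since `μ` is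
`B`-bilinear by construction.)  Flatness over the noncommutative ring `B` is expressed
by the standard equational criterion.
-/

universe u

open TensorProduct

/-- From flatness of `B ⧸ a`: every `x ∈ a` has a "right unit" in `a`. -/
theorem aux_unit {B : Type u} [Ring B] (a : Ideal B)
    (hflat : EquationallyFlat B (B ⧸ a)) {x : B} (hx : x ∈ a) :
    ∃ e ∈ a, x * e = x := by
  obtain ⟨k, b, m', h1, hrel⟩ := hflat 1 (fun _ => x)
      (fun _ => Submodule.Quotient.mk 1) (by
    simp only [Fin.sum_univ_one, ← Submodule.Quotient.mk_smul, smul_eq_mul, mul_one]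
    exact (Submodule.Quotient.mk_eq_zero a).mpr hx)
  choose c hc using fun j => Submodule.Quotient.mk_surjective a (m' j)
  have h1' := h1 0
  have hmem : ((1 : B) - ∑ j, b 0 j * c j) ∈ a := by
    rw [← Submodule.Quotient.mk_eq_zero]
    have : ((Submodule.Quotient.mk (∑ j, b 0 j * c j)) : B ⧸ a)
        = ∑ j, b 0 j • m' j := by
      rw [← Submodule.mkQ_apply, map_sum]
      refine Finset.sum_congr rfl fun j _ => ?_
      rw [Submodule.mkQ_apply, ← hc j, ← Submodule.Quotient.mk_smul, smul_eq_mul]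
    rw [← Submodule.mkQ_apply, map_sub, Submodule.mkQ_apply, Submodule.mkQ_apply,
      this, ← h1']
    exact sub_self _
  refine ⟨1 - ∑ j, b 0 j * c j, hmem, ?_⟩
  have hb : ∀ j, x * b 0 j = 0 := fun j => by
    have := hrel j
    simpa [Fin.sum_univ_one] using this
  rw [mul_sub, mul_one, Finset.mul_sum]
  have : ∀ j ∈ Finset.univ, x * (b 0 j * c j) = 0 := fun j _ => by
    rw [← mul_assoc, hb j, zero_mul]
  rw [Finset.sum_congr rfl this, Finset.sum_const_zero, sub_zero]

/-- Common right unit for finitely many elements of `a` (Tominaga's lemma). -/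
theorem aux_common_unit {B : Type u} [Ring B] (a : Ideal B)
    (hu : ∀ x ∈ a, ∃ e ∈ a, x * e = x)
    {ι : Type*} (s : Finset ι) (f : ι → B) (hf : ∀ i ∈ s, f i ∈ a) :
    ∃ e ∈ a, ∀ i ∈ s, f i * e = f i := by
  classical
  induction s using Finset.induction_on with
  | empty => exact ⟨0, a.zero_mem, by simp⟩
  | @insert i s hi ih =>
    obtain ⟨e, he, hfe⟩ := ih fun j hj => hf j (Finset.mem_insert_of_mem hj)
    obtain ⟨g, hg, hxg⟩ := hu (f i - f i * e)
      (a.sub_mem (hf i (Finset.mem_insert_self i s)) (Ideal.mul_mem_left a (f i) he))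
    refine ⟨e + g - e * g, a.sub_mem (a.add_mem he hg) (Ideal.mul_mem_left a e hg),
      fun j hj => ?_⟩
    rcases Finset.mem_insert.mp hj with rfl | hj
    · calc f j * (e + g - e * g)
          = f j * e + (f j - f j * e) * g := by noncomm_ring
        _ = f j * e + (f j - f j * e) := by rw [hxg]
        _ = f j := by noncomm_ring
    · have h1 : f j * e = f j := hfe j hj
      calc f j * (e + g - e * g)
          = f j * e + f j * g - (f j * e) * g := by noncomm_ring
        _ = f j + f j * g - f j * g := by rw [h1]
        _ = f j := by noncomm_ring

theorem stmt3 {B : Type u} [Ring B] (a : Ideal B)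
    -- `a` is a two-sided ideal:
    (h2 : ∀ x ∈ a, ∀ b : B, x * b ∈ a)
    -- `a` is idempotent (`a² = a`):
    (hidem : Submodule.span B {z : B | ∃ u ∈ a, ∃ v ∈ a, z = u * v} = a)
    -- `B/a` is flat as a left `B`-module:
    (hflat : EquationallyFlat B (B ⧸ a))
    -- the multiplication map `μ : a ⊗_ℤ a → B`, `x ⊗ y ↦ xy`:
    (μ : (↥a ⊗[ℤ] ↥a) →ₗ[ℤ] B)
    (hμ : ∀ (x y : a), μ (x ⊗ₜ y) = (x : B) * (y : B)) :
    -- the image of `μ` is exactly `a` ...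
    (Set.range μ = (a : Set B)) ∧
      -- ... and its kernel is exactly the subgroup of balancing relations, so that the
      -- induced map `a ⊗_B a → a` is an isomorphism (of `B`-bimodules).
      LinearMap.ker μ =
        Submodule.span ℤ
          {z : ↥a ⊗[ℤ] ↥a | ∃ (x y p q : a) (b : B),
            (p : B) = (x : B) * b ∧ (q : B) = b * (y : B) ∧ z = p ⊗ₜ y - x ⊗ₜ q} := by
  have hunit : ∀ x ∈ a, ∃ e ∈ a, x * e = x := fun x hx => aux_unit a hflat hx
  constructor
  · -- range
    ext z
    constructor
    · rintro ⟨t, rfl⟩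
      induction t using TensorProduct.induction_on with
      | zero => simpa using a.zero_mem
      | tmul x y => rw [hμ]; exact Ideal.mul_mem_left a _ y.2
      | add t₁ t₂ h₁ h₂ => rw [map_add]; exact a.add_mem h₁ h₂
    · intro hz
      obtain ⟨e, he, hze⟩ := hunit z hz
      exact ⟨(⟨z, hz⟩ : a) ⊗ₜ (⟨e, he⟩ : a), by rw [hμ]; exact hze⟩
  · -- kernel
    set K := Submodule.span ℤ
      {z : ↥a ⊗[ℤ] ↥a | ∃ (x y p q : a) (b : B),
        (p : B) = (x : B) * b ∧ (q : B) = b * (y : B) ∧ z = p ⊗ₜ y - x ⊗ₜ q} with hK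
    -- the key generator fact
    have key : ∀ (x y u : a), (y : B) * (u : B) = y →
        x ⊗ₜ[ℤ] y - (⟨(x : B) * (y : B), Ideal.mul_mem_left a _ y.2⟩ : a) ⊗ₜ[ℤ] u ∈ K := by
      intro x y u hyu
      have hgen : (⟨(x : B) * (y : B), Ideal.mul_mem_left a _ y.2⟩ : a) ⊗ₜ[ℤ] u
          - x ⊗ₜ[ℤ] y ∈ K := by
        apply Submodule.subset_span
        exact ⟨x, u, ⟨(x : B) * (y : B), Ideal.mul_mem_left a _ y.2⟩, y, (y : B),
          rfl, hyu.symm, rfl⟩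
      simpa using K.neg_mem hgen
    apply le_antisymm
    · -- ker μ ≤ K
      intro t ht
      rw [LinearMap.mem_ker] at ht
      obtain ⟨S, hS⟩ := TensorProduct.exists_finset t
      obtain ⟨e, he, hcom⟩ := aux_common_unit a hunit S (fun p => ((p.2 : a) : B))
        (fun p _ => p.2.2)
      have hsum0 : (∑ p ∈ S, (⟨(p.1 : B) * (p.2 : B),
          Ideal.mul_mem_left a _ p.2.2⟩ : a)) = 0 := by
        have : ((∑ p ∈ S, (⟨(p.1 : B) * (p.2 : B),
            Ideal.mul_mem_left a _ p.2.2⟩ : a) : a) : B) = μ t := by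
          rw [hS, map_sum, Submodule.coe_sum]
          exact Finset.sum_congr rfl fun p _ => (hμ p.1 p.2).symm
        rw [ht] at this
        exact Subtype.ext this
      have h1 : t - (∑ p ∈ S, (⟨(p.1 : B) * (p.2 : B),
          Ideal.mul_mem_left a _ p.2.2⟩ : a) ⊗ₜ[ℤ] (⟨e, he⟩ : a)) ∈ K := by
        rw [hS, ← Finset.sum_sub_distrib]
        exact K.sum_mem fun p hp => key p.1 p.2 ⟨e, he⟩ (hcom p hp)
      have h2' : (∑ p ∈ S, (⟨(p.1 : B) * (p.2 : B),
          Ideal.mul_mem_left a _ p.2.2⟩ : a) ⊗ₜ[ℤ] (⟨e, he⟩ : a)) = 0 := by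
        rw [← TensorProduct.sum_tmul, hsum0, TensorProduct.zero_tmul]
      rwa [h2', sub_zero] at h1
    · -- K ≤ ker μ
      rw [hK, Submodule.span_le]
      rintro z ⟨x, y, p, q, b, hp, hq, rfl⟩
      simp only [SetLike.mem_coe, LinearMap.mem_ker, map_sub, hμ, hp, hq, mul_assoc,
        sub_self]
end

section
/- Let r be an exact preradical on Mod-B associated to a closed subcategory C, with a = r(B). Then the functor F = Hom_B(a, -) restricted to C is right adjoint to r : Mod-B → C; that is, for every right B-module M and every M' in C there is a natural isomorphism Hom_C(r(M), M') ≅ Hom_B(M, Hom_B(a, M')). -/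
/-!
Statement 4.  Let `r` be an exact preradical on the category of (right) `B`-modules
associated to a closed subcategory `C`, with `a = r B`.  Then `Hom_B(a, -)` restricted
to `C` is right adjoint to `r : Mod-B → C`: for every `B`-module `M` and every `M'` in
`C` there is a natural isomorphism `Hom_C(r M, M') ≅ Hom_B(M, Hom_B(a, M'))`.

Formalized for left modules (the mirror image).  `Hom_B(a, M')` carries the module
structure `(b • f) x = f (x b)` (mirror of `(f·b)(x) = f(bx)`), which requires the
(automatic) two-sidedness of `a`; similarly the (automatic) fact `a•M ≤ r M` is taken
as a hypothesis in order to write down the canonical adjunction bijection, whose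
naturality is then automatic since it is given by an explicit formula.
-/

universe u

open DirectSum

variable {B : Type u} [Ring B]

/-- `Hom_B(a, M)` as a `B`-module, with action `(b • f) x = f (x * b)`. -/
def THom (a : Ideal B) (_h2 : ∀ x ∈ a, ∀ b : B, x * b ∈ a) (M : Type u) [AddCommGroup M]
    [Module B M] : Type u :=
  ↥a →ₗ[B] M

namespace THom

variable {a : Ideal B} {h2 : ∀ x ∈ a, ∀ b : B, x * b ∈ a} {M : Type u} [AddCommGroup M]
  [Module B M]

instance : AddCommGroup (THom a h2 M) :=
  inferInstanceAs (AddCommGroup (↥a →ₗ[B] M))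

/-- The underlying linear map. -/
def toLin (f : THom a h2 M) : ↥a →ₗ[B] M := f

theorem ext' {f g : THom a h2 M} (h : ∀ x : ↥a, f.toLin x = g.toLin x) : f = g :=
  LinearMap.ext h

def smulAux (b : B) (f : THom a h2 M) : THom a h2 M where
  toFun := fun x => f.toLin ⟨(x : B) * b, h2 x x.2 b⟩
  map_add' := by
    intro x y
    show f.toLin ⟨((x + y : ↥a) : B) * b, h2 _ (x + y).2 b⟩
        = f.toLin ⟨(x : B) * b, h2 x x.2 b⟩ + f.toLin ⟨(y : B) * b, h2 y y.2 b⟩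
    have h : (⟨((x + y : ↥a) : B) * b, h2 _ (x + y).2 b⟩ : ↥a)
        = ⟨(x : B) * b, h2 x x.2 b⟩ + ⟨(y : B) * b, h2 y y.2 b⟩ :=
      Subtype.ext (by simp [add_mul])
    rw [h, map_add]
  map_smul' := by
    intro c x
    show f.toLin ⟨((c • x : ↥a) : B) * b, h2 _ (c • x).2 b⟩
        = (RingHom.id B) c • f.toLin ⟨(x : B) * b, h2 x x.2 b⟩
    have h : (⟨((c • x : ↥a) : B) * b, h2 _ (c • x).2 b⟩ : ↥a)
        = c • ⟨(x : B) * b, h2 x x.2 b⟩ :=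
      Subtype.ext (by simp [mul_assoc, smul_eq_mul])
    rw [h, map_smul]
    rfl

instance : Module B (THom a h2 M) where
  smul := smulAux
  one_smul f := ext' fun x => by
    show f.toLin ⟨(x : B) * 1, _⟩ = f.toLin x
    congr 1
    exact Subtype.ext (by simp)
  mul_smul b c f := ext' fun x => by
    show f.toLin ⟨(x : B) * (b * c), _⟩ = f.toLin ⟨((x : B) * b) * c, _⟩
    congr 1
    exact Subtype.ext (by simp [mul_assoc])
  smul_zero b := ext' fun x => rfl
  smul_add b f g := ext' fun x => rfl
  add_smul b c f := ext' fun x => by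
    show f.toLin ⟨(x : B) * (b + c), _⟩ = f.toLin ⟨(x : B) * b, _⟩ + f.toLin ⟨(x : B) * c, _⟩
    have h : (⟨(x : B) * (b + c), h2 x x.2 (b + c)⟩ : ↥a)
        = ⟨(x : B) * b, h2 x x.2 b⟩ + ⟨(x : B) * c, h2 x x.2 c⟩ :=
      Subtype.ext (by simp [mul_add])
    rw [h, map_add]
  zero_smul f := ext' fun x => by
    show f.toLin ⟨(x : B) * 0, _⟩ = 0
    have h : (⟨(x : B) * 0, h2 x x.2 0⟩ : ↥a) = 0 := Subtype.ext (by simp)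
    rw [h, map_zero]

@[simp] theorem smul_apply (b : B) (f : THom a h2 M) (x : ↥a) :
    (b • f).toLin x = f.toLin ⟨(x : B) * b, h2 x x.2 b⟩ := rfl

end THom


def TSet (r : ∀ (M : Type u) [AddCommGroup M] [Module B M], Submodule B M)
    (M : Type u) [AddCommGroup M] [Module B M] : Set M :=
  {y | ∃ x ∈ r B, ∃ m : M, y = x • m}

theorem r_le_span (r : ∀ (M : Type u) [AddCommGroup M] [Module B M], Submodule B M)
    (hexact : ∀ {M N : Type u} [AddCommGroup M] [Module B M] [AddCommGroup N] [Module B N]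
      (f : M →ₗ[B] N), Function.Surjective f → (r M).map f = r N)
    (M : Type u) [AddCommGroup M] [Module B M] :
    r M ≤ Submodule.span B (TSet r M) := by
  classical
  let π : (⨁ (_ : M), B) →ₗ[B] M :=
    DirectSum.toModule B M M (fun m => LinearMap.toSpanSingleton B M m)
  have hπ : Function.Surjective π := fun m =>
    ⟨DirectSum.lof B M (fun _ => B) m 1, by
      simp [π, DirectSum.toModule_lof]⟩
  intro y hy
  rw [← hexact π hπ] at hy
  obtain ⟨v, hv, rfl⟩ := hy
  have hcoord : ∀ i : M, v i ∈ r B := by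
    intro i
    have hs : Function.Surjective (DirectSum.component B M (fun _ => B) i) := fun b =>
      ⟨DirectSum.lof B M (fun _ => B) i b, DirectSum.component.lof_self ..⟩
    rw [← hexact _ hs]
    exact ⟨v, hv, rfl⟩
  have hv2 : π v = ∑ i ∈ DFinsupp.support v, (v i) • i := by
    conv_lhs => rw [← DirectSum.sum_support_of v]
    rw [map_sum]
    refine Finset.sum_congr rfl fun i _ => ?_
    rw [← DirectSum.lof_eq_of B, DirectSum.toModule_lof]
    rfl
  rw [hv2]
  exact Submodule.sum_mem _ fun i _ => Submodule.subset_span ⟨v i, hcoord i, i, rfl⟩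

theorem stmt4 (C : ClosedSubcategory B)
    (r : ∀ (M : Type u) [AddCommGroup M] [Module B M], Submodule B M)
    (hmem : ∀ (M : Type u) [AddCommGroup M] [Module B M], C.Mem (r M))
    (hmax : ∀ (M : Type u) [AddCommGroup M] [Module B M] (N : Submodule B M),
      C.Mem N → N ≤ r M)
    (hexact : ∀ {M N : Type u} [AddCommGroup M] [Module B M] [AddCommGroup N] [Module B N]
      (f : M →ₗ[B] N), Function.Surjective f → (r M).map f = r N)
    -- (automatic) two-sidedness of `a = r B`:
    (h2 : ∀ x ∈ r B, ∀ b : B, x * b ∈ r B)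
    -- (automatic) `a • M ≤ r M`:
    (hsm : ∀ (M : Type u) [AddCommGroup M] [Module B M], ∀ {x : B}, x ∈ r B →
      ∀ m : M, x • m ∈ r M) :
    -- the canonical natural bijection `Hom_C(r M, M') ≅ Hom_B(M, Hom_B(a, M'))`:
    ∀ (M : Type u) [AddCommGroup M] [Module B M] (M' : Type u) [AddCommGroup M']
      [Module B M'], C.Mem M' →
      ∃ e : (↥(r M) →ₗ[B] M') ≃ (M →ₗ[B] THom (r B) h2 M'),
        ∀ (g : ↥(r M) →ₗ[B] M') (m : M) (x : ↥(r B)),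
          ((e g) m).toLin x = g ⟨(x : B) • m, hsm M x.2 m⟩ := by

  classical
  intro M _ _ M' _ _ hM'
  have span_le_r : ∀ (N : Type u) [AddCommGroup N] [Module B N],
      Submodule.span B (TSet r N) ≤ r N := by
    intro N _ _
    refine Submodule.span_le.mpr ?_
    rintro y ⟨x, hx, m, rfl⟩
    exact hsm N hx m
  -- the forward map
  have smul_mem : ∀ (x : ↥(r B)) (m : M), (x : B) • m ∈ r M := fun x m => hsm M x.2 m
  let Φ : (↥(r M) →ₗ[B] M') → M → THom (r B) h2 M' := fun g m =>
    { toFun := fun x => g ⟨(x : B) • m, smul_mem x m⟩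
      map_add' := by
        intro x y
        show g ⟨((x + y : ↥(r B)) : B) • m, smul_mem (x + y) m⟩
            = g ⟨(x : B) • m, smul_mem x m⟩ + g ⟨(y : B) • m, smul_mem y m⟩
        have h : (⟨((x + y : ↥(r B)) : B) • m, smul_mem (x + y) m⟩ : ↥(r M))
            = ⟨(x : B) • m, smul_mem x m⟩ + ⟨(y : B) • m, smul_mem y m⟩ :=
          Subtype.ext (by simp [add_smul])
        rw [h, map_add]
      map_smul' := by
        intro c x
        show g ⟨((c • x : ↥(r B)) : B) • m, smul_mem (c • x) m⟩
            = (RingHom.id B) c • g ⟨(x : B) • m, smul_mem x m⟩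
        have h : (⟨((c • x : ↥(r B)) : B) • m, smul_mem (c • x) m⟩ : ↥(r M))
            = c • ⟨(x : B) • m, smul_mem x m⟩ :=
          Subtype.ext (by simp [mul_smul, smul_eq_mul])
        rw [h, map_smul]
        rfl }
  let E : (↥(r M) →ₗ[B] M') → (M →ₗ[B] THom (r B) h2 M') := fun g =>
    { toFun := Φ g
      map_add' := by
        intro m₁ m₂
        refine THom.ext' fun x => ?_
        show g ⟨(x : B) • (m₁ + m₂), _⟩ = g ⟨(x : B) • m₁, _⟩ + g ⟨(x : B) • m₂, _⟩
        have h : (⟨(x : B) • (m₁ + m₂), smul_mem x (m₁ + m₂)⟩ : ↥(r M))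
            = ⟨(x : B) • m₁, smul_mem x m₁⟩ + ⟨(x : B) • m₂, smul_mem x m₂⟩ :=
          Subtype.ext (by simp [smul_add])
        rw [h, map_add]
      map_smul' := by
        intro b m
        refine THom.ext' fun x => ?_
        show g ⟨(x : B) • (b • m), _⟩ = g ⟨((x : B) * b) • m, _⟩
        congr 1
        exact Subtype.ext (by simp [smul_smul]) }
  have hE : ∀ (g : ↥(r M) →ₗ[B] M') (m : M) (x : ↥(r B)),
      ((E g) m).toLin x = g ⟨(x : B) • m, hsm M x.2 m⟩ := fun g m x => rfl
  -- injectivity of E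
  have hEinj : Function.Injective E := by
    intro g g' hgg
    refine LinearMap.ext fun n => ?_
    obtain ⟨n, hn⟩ := n
    have hn' : n ∈ Submodule.span B (TSet r M) := r_le_span r @hexact M hn
    induction hn' using Submodule.span_induction with
    | mem y hy =>
        obtain ⟨x, hx, m, rfl⟩ := hy
        have := congrArg (fun (F : M →ₗ[B] THom (r B) h2 M') => (F m).toLin ⟨x, hx⟩) hgg
        exact this
    | zero =>
        have h0 : (⟨0, hn⟩ : ↥(r M)) = 0 := rfl
        rw [h0, map_zero, map_zero]
    | add y z hy hz ihy ihz =>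
        have hyr : y ∈ r M := span_le_r M hy
        have hzr : z ∈ r M := span_le_r M hz
        have h : (⟨y + z, hn⟩ : ↥(r M)) = ⟨y, hyr⟩ + ⟨z, hzr⟩ := rfl
        rw [h, map_add, map_add, ihy hyr, ihz hzr]
    | smul a y hy ihy =>
        have hyr : y ∈ r M := span_le_r M hy
        have h : (⟨a • y, hn⟩ : ↥(r M)) = a • ⟨y, hyr⟩ := rfl
        rw [h, map_smul, map_smul, ihy hyr]
  -- the unit map δ : M' → THom (r B) h2 M'
  let δ : M' →ₗ[B] THom (r B) h2 M' :=
    { toFun := fun m' =>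
        { toFun := fun x => (x : B) • m'
          map_add' := by intro x y; simp [add_smul]
          map_smul' := by intro c x; simp [mul_smul, smul_eq_mul] }
      map_add' := by intro m₁ m₂; refine THom.ext' fun x => ?_; simp [smul_add]; rfl
      map_smul' := by
        intro b m'
        refine THom.ext' fun x => ?_
        show (x : B) • (b • m') = ((x : B) * b) • m'
        rw [smul_smul] }
  have hδ : ∀ (m' : M') (x : ↥(r B)), (δ m').toLin x = (x : B) • m' := fun _ _ => rfl
  -- δ is injective since M' ∈ C
  have hδinj : Function.Injective δ := by
    rw [injective_iff_map_eq_zero]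
    intro m' hm'
    have hz : ∀ x ∈ r B, x • m' = 0 := by
      intro x hx
      have h0 : (δ m').toLin ⟨x, hx⟩ = (0 : THom (r B) h2 M').toLin ⟨x, hx⟩ := by
        rw [hm']
      exact h0
    set N : Submodule B M' := Submodule.span B {m'} with hN
    have hmemN : C.Mem ↥N := C.mem_submodule N hM'
    have hmemTop : C.Mem ↥(⊤ : Submodule B ↥N) :=
      C.mem_congr (Submodule.topEquiv (R := B) (M := ↥N)).symm hmemN
    have htop : (⊤ : Submodule B ↥N) ≤ r ↥N := hmax ↥N ⊤ hmemTop
    have hbot : r ↥N ≤ ⊥ := by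
      refine le_trans (r_le_span r @hexact ↥N) (Submodule.span_le.mpr ?_)
      rintro y ⟨x, hx, n, rfl⟩
      obtain ⟨b, hb⟩ := Submodule.mem_span_singleton.mp n.2
      have : ((x • n : ↥N) : M') = 0 := by
        show x • (n : M') = 0
        rw [← hb, smul_smul]
        exact hz _ (h2 x hx b)
      simpa [Submodule.mem_bot] using Subtype.ext this
    have : (⟨m', Submodule.mem_span_singleton_self m'⟩ : ↥N) = 0 := by
      have := hbot (htop (Submodule.mem_top (x := (⟨m', Submodule.mem_span_singleton_self m'⟩ : ↥N))))
      simpa [Submodule.mem_bot] using this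
    exact congrArg Subtype.val this
  -- surjectivity of E
  have hEsurj : Function.Surjective E := by
    intro f
    have hrange : ∀ n : M, n ∈ r M → f n ∈ LinearMap.range δ := by
      intro n hn
      have hn' : n ∈ Submodule.span B (TSet r M) := r_le_span r @hexact M hn
      clear hn
      induction hn' using Submodule.span_induction with
      | mem y hy =>
          obtain ⟨x, hx, m, rfl⟩ := hy
          refine ⟨(f m).toLin ⟨x, hx⟩, ?_⟩
          refine THom.ext' fun y => ?_
          have h1 : f ((x : B) • m) = (x : B) • f m := map_smul f (x : B) m
          rw [h1]
          show (y : B) • (f m).toLin ⟨x, hx⟩ = (f m).toLin ⟨(y : B) * x, _⟩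
          rw [← map_smul]
          congr 1
      | zero => rw [map_zero]; exact Submodule.zero_mem _
      | add y z _ _ ihy ihz => rw [map_add]; exact Submodule.add_mem _ ihy ihz
      | smul a y _ ihy => rw [map_smul]; exact Submodule.smul_mem _ a ihy
    let eδ := LinearEquiv.ofInjective δ hδinj
    let g : ↥(r M) →ₗ[B] M' :=
      eδ.symm.toLinearMap ∘ₗ
        LinearMap.codRestrict (LinearMap.range δ) (f ∘ₗ (r M).subtype)
          (fun n => hrange n n.2)
    refine ⟨g, ?_⟩
    refine LinearMap.ext fun m => THom.ext' fun x => ?_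
    show g ⟨(x : B) • m, smul_mem x m⟩ = (f m).toLin x
    show eδ.symm ⟨f ((x : B) • m), _⟩ = (f m).toLin x
    rw [LinearEquiv.symm_apply_eq]
    refine Subtype.ext ?_
    show f ((x : B) • m) = δ ((f m).toLin x)
    refine THom.ext' fun y => ?_
    have h1 : f ((x : B) • m) = (x : B) • f m := map_smul f (x : B) m
    rw [h1]
    show (f m).toLin ⟨(y : B) * x, _⟩ = (y : B) • (f m).toLin x
    rw [← map_smul]
    congr 1
  exact ⟨Equiv.ofBijective E ⟨hEinj, hEsurj⟩, hE⟩
end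

section
/- Let r be an exact preradical on Mod-B associated to a closed subcategory C and a = r(B). If E is an injective object of the category C, then Hom_B(a, E) is an injective right B-module. -/
/-!
Statement 5.  Let `r` be an exact preradical on the category of (right) `B`-modules
associated to a closed subcategory `C` and `a = r B`.  If `E` is an injective object
of the category `C`, then `Hom_B(a, E)` is an injective `B`-module.
(Formalized for left modules, the mirror image; `Hom_B(a, E)` carries the module
structure `(b • f) x = f (x b)`, which uses the automatic two-sidedness of `a`.)
-/

universe u

open DirectSum

variable {B : Type u} [Ring B]

/-- `E` is an injective object of the closed subcategory `C`: every `B`-linear map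
to `E` from an object of `C` extends along monomorphisms of `C`. -/
def InjectiveIn (C : ClosedSubcategory B) (E : Type u) [AddCommGroup E] [Module B E] : Prop :=
  ∀ (M N : Type u) [AddCommGroup M] [Module B M] [AddCommGroup N] [Module B N],
    C.Mem M → C.Mem N → ∀ (f : M →ₗ[B] N), Function.Injective f →
      ∀ g : M →ₗ[B] E, ∃ h : N →ₗ[B] E, ∀ m, h (f m) = g m

set_option maxHeartbeats 1600000 in
theorem stmt5 (C : ClosedSubcategory B)
    (r : ∀ (M : Type u) [AddCommGroup M] [Module B M], Submodule B M)
    (hmem : ∀ (M : Type u) [AddCommGroup M] [Module B M], C.Mem (r M))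
    (hmax : ∀ (M : Type u) [AddCommGroup M] [Module B M] (N : Submodule B M),
      C.Mem N → N ≤ r M)
    (hexact : ∀ {M N : Type u} [AddCommGroup M] [Module B M] [AddCommGroup N] [Module B N]
      (f : M →ₗ[B] N), Function.Surjective f → (r M).map f = r N)
    -- (automatic) two-sidedness of `a = r B`:
    (h2 : ∀ x ∈ r B, ∀ b : B, x * b ∈ r B)
    (E : Type u) [AddCommGroup E] [Module B E] (hE : C.Mem E)
    (hinj : InjectiveIn C E) :
    Module.Injective B (THom (r B) h2 E) := by
  
  classical
  apply Module.Baer.injective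
  -- notation
  set Q := THom (r B) h2 E with hQ
  -- (0) transfer of `C.Mem` along `≤` of submodules
  have memLe : ∀ (X : Type u) [AddCommGroup X] [Module B X] (S T : Submodule B X),
      S ≤ T → C.Mem ↥T → C.Mem ↥S := by
    intro X _ _ S T hle hT
    exact C.mem_congr (Submodule.comapSubtypeEquivOfLe hle) (C.mem_submodule _ hT)
  -- (1) `r M ≤ (r B) • ⊤` for every module `M`
  have rle : ∀ (M : Type u) [AddCommGroup M] [Module B M] (t : M), t ∈ r M →
      t ∈ (r B) • (⊤ : Submodule B M) := by
    intro M _ _ t ht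
    let ψ : (⨁ (_ : M), B) →ₗ[B] M :=
      DirectSum.toModule B M M fun m => LinearMap.toSpanSingleton B M m
    have hψ : Function.Surjective ψ := by
      intro m
      refine ⟨DirectSum.lof B M (fun _ => B) m 1, ?_⟩
      rw [DirectSum.toModule_lof, LinearMap.toSpanSingleton_apply, one_smul]
    rw [← hexact ψ hψ] at ht
    obtain ⟨s, hs, rfl⟩ := ht
    have hcoord : ∀ i : M, s i ∈ r B := by
      intro i
      have hπ : Function.Surjective (DirectSum.component B M (fun _ => B) i) := fun b =>
        ⟨DirectSum.lof B M (fun _ => B) i b, by rw [DirectSum.component.lof_self]⟩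
      rw [← hexact (DirectSum.component B M (fun _ => B) i) hπ]
      exact ⟨s, hs, rfl⟩
    rw [← DirectSum.sum_support_of s, map_sum]
    refine Submodule.sum_mem _ fun i _ => ?_
    have : ψ (DirectSum.of (fun _ => B) i (s i)) = (s i) • i := by
      rw [← DirectSum.lof_eq_of B, DirectSum.toModule_lof, LinearMap.toSpanSingleton_apply]
    rw [this]
    exact Submodule.smul_mem_smul (hcoord i) trivial
  -- (2) key well-definedness lemma
  have key : ∀ (M : Type u) [AddCommGroup M] [Module B M] (g : M →ₗ[B] Q)
      (ι : Type u) (s : Finset ι) (x : ι → B) (hx : ∀ p, x p ∈ r B) (m : ι → M),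
      (∑ p ∈ s, x p • m p = 0) →
      ∑ p ∈ s, (g (m p)).toLin ⟨x p, hx p⟩ = 0 := by
    intro M _ _ g ι s x hx m hsum
    set κ := {p : ι // p ∈ s} with hκ
    let ψ : (⨁ (_ : κ), B) →ₗ[B] M :=
      DirectSum.toModule B κ M fun k => LinearMap.toSpanSingleton B M (m k.1)
    have hψsum : ∀ w : ⨁ (_ : κ), B, ψ w = ∑ k : κ, (w k) • m k.1 := by
      intro w
      induction w using DirectSum.induction_on with
      | zero => simp
      | of j b =>
        rw [← DirectSum.lof_eq_of B, DirectSum.toModule_lof, LinearMap.toSpanSingleton_apply]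
        rw [Finset.sum_eq_single j]
        · rw [DirectSum.lof_eq_of, DirectSum.of_eq_same]
        · intro k _ hk
          rw [DirectSum.lof_eq_of, DirectSum.of_eq_of_ne _ _ _ hk, zero_smul]
        · intro h; exact absurd (Finset.mem_univ j) h
      | add w₁ w₂ h1 h2' =>
        rw [map_add, h1, h2', ← Finset.sum_add_distrib]
        exact Finset.sum_congr rfl fun k _ => by rw [DirectSum.add_apply, add_smul]
    let v : ⨁ (_ : κ), B := ∑ k : κ, DirectSum.lof B κ (fun _ => B) k (x k.1)
    have hvk : ∀ k : κ, v k = x k.1 := by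
      intro k
      have : v k = ∑ j : κ, (DirectSum.lof B κ (fun _ => B) j (x j.1)) k := by
        rw [DirectSum.apply_eq_component B, map_sum]
        rfl
      rw [this, Finset.sum_eq_single k]
      · rw [DirectSum.lof_eq_of, DirectSum.of_eq_same]
      · intro j _ hj
        rw [DirectSum.lof_eq_of, DirectSum.of_eq_of_ne _ _ _ (Ne.symm hj)]
      · intro h; exact absurd (Finset.mem_univ k) h
    have hv : ψ v = 0 := by
      rw [hψsum]
      have : ∑ k : κ, (v k) • m k.1 = ∑ k : κ, x k.1 • m k.1 :=
        Finset.sum_congr rfl fun k _ => by rw [hvk k]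
      rw [this, ← hsum]
      exact Finset.sum_coe_sort s fun p => x p • m p
    set K := LinearMap.ker ψ with hK
    -- the submodule of coordinatewise-`r B` elements, as the range of an injection
    let Φ : (⨁ (_ : κ), ↥(r B)) →ₗ[B] (⨁ (_ : κ), B) :=
      DirectSum.toModule B κ (⨁ (_ : κ), B) fun k => (DirectSum.lof B κ (fun _ => B) k).comp (r B).subtype
    have hΦlof : ∀ (k : κ) (y : ↥(r B)),
        Φ (DirectSum.lof B κ (fun _ => ↥(r B)) k y) = DirectSum.lof B κ (fun _ => B) k (y : B) :=
      fun k y => DirectSum.toModule_lof (M := fun _ : κ => ↥(r B)) B k y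
    have hΦcoord : ∀ (w : ⨁ (_ : κ), ↥(r B)) (k : κ), Φ w k = ((w k : B)) := by
      intro w
      induction w using DirectSum.induction_on with
      | zero => intro k; simp
      | of j b =>
        intro k
        rw [← DirectSum.lof_eq_of B, hΦlof]
        by_cases h : j = k
        · subst h; rw [DirectSum.lof_eq_of, DirectSum.of_eq_same, DirectSum.lof_eq_of,
            DirectSum.of_eq_same]
        · rw [DirectSum.lof_eq_of, DirectSum.of_eq_of_ne _ _ _ (Ne.symm h), DirectSum.lof_eq_of,
            DirectSum.of_eq_of_ne _ _ _ (Ne.symm h)]; rfl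
      | add w₁ w₂ h1 h2' =>
        intro k
        rw [map_add, DirectSum.add_apply, h1, h2', DirectSum.add_apply]
        rfl
    have hΦinj : Function.Injective Φ := by
      intro w₁ w₂ h
      refine DFunLike.ext _ _ fun k => ?_
      have := congrArg (fun z => z k) h
      simp only [hΦcoord] at this
      exact Subtype.ext this
    have hSmem : C.Mem ↥(LinearMap.range Φ) :=
      C.mem_congr (LinearEquiv.ofInjective Φ hΦinj)
        (C.mem_directSum (fun _ : κ => ↥(r B)) fun _ => hmem B)
    have hvrange : v ∈ LinearMap.range Φ := by
      refine ⟨∑ k : κ, DirectSum.lof B κ (fun _ => ↥(r B)) k ⟨x k.1, hx k.1⟩, ?_⟩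
      rw [map_sum]
      exact Finset.sum_congr rfl fun k _ => hΦlof k _
    have hvK : v ∈ K := LinearMap.mem_ker.mpr hv
    -- v lies in r K, hence in (r B) • ⊤
    have hvrK : (⟨v, hvK⟩ : ↥K) ∈ (r B) • (⊤ : Submodule B ↥K) := by
      have hT : C.Mem ↥(LinearMap.range Φ ⊓ K : Submodule B _) :=
        memLe _ _ _ inf_le_left hSmem
      have hT' : @ClosedSubcategory.Mem B _ C ↥((LinearMap.range Φ ⊓ K).comap K.subtype)
          (@Submodule.addCommGroup B ↥K _ _ _ _) (Submodule.module _) :=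
        @ClosedSubcategory.mem_congr B _ C _ _ _ _ (@Submodule.addCommGroup B ↥K _ _ _ _) _
          (Submodule.comapSubtypeEquivOfLe inf_le_right).symm hT
      have hle := hmax ↥K ((LinearMap.range Φ ⊓ K).comap K.subtype) hT'
      exact rle ↥K _ (hle (by exact ⟨hvrange, hvK⟩))
    -- induction on the membership
    have main : ∀ u : ↥K, u ∈ (r B) • (⊤ : Submodule B ↥K) →
        ∃ hc : ∀ k : κ, ((u : ⨁ (_ : κ), B) k) ∈ r B,
          ∑ k : κ, (g (m k.1)).toLin ⟨(u : ⨁ (_ : κ), B) k, hc k⟩ = 0 := by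
      intro u hu
      refine Submodule.smul_induction_on hu ?_ ?_
      · intro c hcmem w _
        have hwcoord : ∀ k : κ, ((c • w : ↥K) : ⨁ (_ : κ), B) k = c * ((w : ⨁ (_ : κ), B) k) := by
          intro k
          rw [Submodule.coe_smul, DirectSum.smul_apply]
          rfl
        refine ⟨fun k => by rw [hwcoord k]; exact h2 c hcmem _, ?_⟩
        have step : ∀ k : κ,
            (g (m k.1)).toLin ⟨((c • w : ↥K) : ⨁ (_ : κ), B) k, by rw [hwcoord k]; exact h2 c hcmem _⟩
            = (g (((w : ⨁ (_ : κ), B) k) • m k.1)).toLin ⟨c, hcmem⟩ := by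
          intro k
          have e1 : (⟨((c • w : ↥K) : ⨁ (_ : κ), B) k, by rw [hwcoord k]; exact h2 c hcmem _⟩ : ↥(r B))
              = ⟨c * ((w : ⨁ (_ : κ), B) k), h2 c hcmem _⟩ := Subtype.ext (hwcoord k)
          rw [e1, map_smul]
          exact (THom.smul_apply ((w : ⨁ (_ : κ), B) k) (g (m k.1)) ⟨c, hcmem⟩).symm
        rw [Finset.sum_congr rfl fun k _ => step k]
        have : ∑ k : κ, (g (((w : ⨁ (_ : κ), B) k) • m k.1)).toLin ⟨c, hcmem⟩
            = (g (∑ k : κ, ((w : ⨁ (_ : κ), B) k) • m k.1)).toLin ⟨c, hcmem⟩ := by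
          rw [map_sum]
          exact (LinearMap.sum_apply _ _ _).symm
        rw [this, ← hψsum, (LinearMap.mem_ker.mp w.2 : ψ _ = 0)]
        simp [THom.toLin]
        rfl
      · rintro u₁ u₂ ⟨hc₁, h₁⟩ ⟨hc₂, h₂⟩
        have hadd : ∀ k : κ, ((u₁ + u₂ : ↥K) : ⨁ (_ : κ), B) k
            = ((u₁ : ⨁ (_ : κ), B) k) + ((u₂ : ⨁ (_ : κ), B) k) := by
          intro k; rw [Submodule.coe_add, DirectSum.add_apply]
        refine ⟨fun k => by rw [hadd k]; exact add_mem (hc₁ k) (hc₂ k), ?_⟩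
        have step : ∀ k : κ,
            (g (m k.1)).toLin ⟨((u₁ + u₂ : ↥K) : ⨁ (_ : κ), B) k, by rw [hadd k]; exact add_mem (hc₁ k) (hc₂ k)⟩
            = (g (m k.1)).toLin ⟨(u₁ : ⨁ (_ : κ), B) k, hc₁ k⟩
              + (g (m k.1)).toLin ⟨(u₂ : ⨁ (_ : κ), B) k, hc₂ k⟩ := by
          intro k
          have e1 : (⟨((u₁ + u₂ : ↥K) : ⨁ (_ : κ), B) k, by rw [hadd k]; exact add_mem (hc₁ k) (hc₂ k)⟩ : ↥(r B))
              = ⟨(u₁ : ⨁ (_ : κ), B) k, hc₁ k⟩ + ⟨(u₂ : ⨁ (_ : κ), B) k, hc₂ k⟩ :=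
            Subtype.ext (hadd k)
          rw [e1, map_add]
        rw [Finset.sum_congr rfl fun k _ => step k, Finset.sum_add_distrib, h₁, h₂, add_zero]
    obtain ⟨hc, hmain⟩ := main ⟨v, hvK⟩ hvrK
    have final : ∀ k : κ, (g (m k.1)).toLin ⟨v k, hc k⟩ = (g (m k.1)).toLin ⟨x k.1, hx k.1⟩ := by
      intro k
      have e1 : (⟨v k, hc k⟩ : ↥(r B)) = ⟨x k.1, hx k.1⟩ := Subtype.ext (hvk k)
      rw [e1]
    rw [Finset.sum_congr rfl fun k _ => final k] at hmain
    rw [← Finset.sum_coe_sort s fun p => (g (m p)).toLin ⟨x p, hx p⟩]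
    exact hmain
  -- (3) Baer's criterion
  intro I g
  set P := ↥(r B) × ↥I with hP
  let Ψ : (⨁ (_ : P), B) →ₗ[B] B :=
    DirectSum.toModule B P B fun p => LinearMap.toSpanSingleton B B ((p.1 : B) * (p.2 : B))
  let Θ : (⨁ (_ : P), B) →ₗ[B] E :=
    DirectSum.toModule B P E fun p => LinearMap.toSpanSingleton B E ((g p.2).toLin p.1)
  have hΨof : ∀ (p : P) (b : B), Ψ (DirectSum.of (fun _ => B) p b) = b * ((p.1 : B) * (p.2 : B)) := by
    intro p b
    rw [← DirectSum.lof_eq_of B, DirectSum.toModule_lof, LinearMap.toSpanSingleton_apply,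
      smul_eq_mul]
  have hΘof : ∀ (p : P) (b : B), Θ (DirectSum.of (fun _ => B) p b) = b • (g p.2).toLin p.1 := by
    intro p b
    rw [← DirectSum.lof_eq_of B, DirectSum.toModule_lof, LinearMap.toSpanSingleton_apply]
  have hJle : LinearMap.range Ψ ≤ r B := by
    rintro z ⟨w, rfl⟩
    rw [← DirectSum.sum_support_of w, map_sum]
    refine Submodule.sum_mem _ fun p _ => ?_
    rw [hΨof]
    exact (r B).smul_mem _ (h2 _ p.1.2 _)
  have hker : ∀ w, Ψ w = 0 → Θ w = 0 := by
    intro w hw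
    have hx : ∀ p : P, w p * (p.1 : B) ∈ r B := fun p => (r B).smul_mem _ p.1.2
    have hΨsum : ∑ p ∈ DFinsupp.support w, w p * ((p.1 : B) * (p.2 : B)) = 0 := by
      rw [← hw]
      conv_rhs => rw [← DirectSum.sum_support_of w]
      rw [map_sum]
      exact Finset.sum_congr rfl fun p _ => (hΨof p (w p)).symm
    have hsum : ∑ p ∈ DFinsupp.support w, ((w p * (p.1 : B)) • p.2 : ↥I) = 0 := by
      apply Submodule.injective_subtype I
      rw [map_sum, map_zero]
      have e1 : ∀ p ∈ DFinsupp.support w,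
          I.subtype ((w p * (p.1 : B)) • p.2) = w p * ((p.1 : B) * (p.2 : B)) := by
        intro p _
        rw [map_smul, Submodule.subtype_apply, smul_eq_mul, mul_assoc]
      rw [Finset.sum_congr rfl e1]
      exact hΨsum
    have hkey := key ↥I g P (DFinsupp.support w) (fun p => w p * (p.1 : B)) hx (fun p => p.2) hsum
    conv_lhs => rw [← DirectSum.sum_support_of w]
    rw [map_sum]
    have e2 : ∀ p ∈ DFinsupp.support w, Θ (DirectSum.of (fun _ => B) p (w p))
        = (g p.2).toLin ⟨w p * (p.1 : B), hx p⟩ := by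
      intro p _
      rw [hΘof, ← map_smul]
      have e3 : ((w p) • (p.1 : ↥(r B))) = (⟨w p * (p.1 : B), hx p⟩ : ↥(r B)) := Subtype.ext rfl
      rw [e3]
    rw [Finset.sum_congr rfl e2]
    exact hkey
  have hkerle : LinearMap.ker Ψ ≤ LinearMap.ker Θ := fun w hw =>
    LinearMap.mem_ker.mpr (hker w (LinearMap.mem_ker.mp hw))
  let φ : ↥(LinearMap.range Ψ) →ₗ[B] E :=
    ((LinearMap.ker Ψ).liftQ Θ hkerle).comp (Ψ.quotKerEquivRange.symm : _ →ₗ[B] _)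
  have hφ : ∀ w : ⨁ (_ : P), B, φ ⟨Ψ w, LinearMap.mem_range_self Ψ w⟩ = Θ w := by
    intro w
    have h1 : Ψ.quotKerEquivRange (Submodule.Quotient.mk w) = ⟨Ψ w, LinearMap.mem_range_self Ψ w⟩ :=
      Subtype.ext (LinearMap.quotKerEquivRange_apply_mk Ψ w)
    have h2' : Ψ.quotKerEquivRange.symm ⟨Ψ w, LinearMap.mem_range_self Ψ w⟩
        = Submodule.Quotient.mk w := by
      rw [← h1, LinearEquiv.symm_apply_apply]
    show ((LinearMap.ker Ψ).liftQ Θ hkerle) (Ψ.quotKerEquivRange.symm ⟨Ψ w, _⟩) = Θ w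
    rw [h2', Submodule.liftQ_apply]
  have hJmem : C.Mem ↥(LinearMap.range Ψ) := memLe B _ _ hJle (hmem B)
  obtain ⟨h, hh⟩ := hinj ↥(LinearMap.range Ψ) ↥(r B) hJmem (hmem B)
    (Submodule.inclusion hJle) (Submodule.inclusion_injective hJle) φ
  
  let h' : Q := h
  refine ⟨LinearMap.toSpanSingleton B Q h', ?_⟩
  intro i hi
  rw [LinearMap.toSpanSingleton_apply]
  apply THom.ext'
  intro x
  have hmemJ : (x : B) * i ∈ LinearMap.range Ψ := by
    refine ⟨DirectSum.of (fun _ => B) ((x, ⟨i, hi⟩) : P) 1, ?_⟩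
    rw [hΨof, one_mul]
  have lhs : (i • h').toLin x = h ⟨(x : B) * i, h2 x x.2 i⟩ := THom.smul_apply i h' x
  rw [lhs]
  have : (⟨(x : B) * i, h2 x x.2 i⟩ : ↥(r B))
      = Submodule.inclusion hJle ⟨(x : B) * i, hmemJ⟩ := Subtype.ext rfl
  rw [this, hh]
  have : (⟨(x : B) * i, hmemJ⟩ : ↥(LinearMap.range Ψ))
      = ⟨Ψ (DirectSum.of (fun _ => B) ((x, ⟨i, hi⟩) : P) 1),
          LinearMap.mem_range_self Ψ _⟩ := Subtype.ext (((hΨof ((x, ⟨i, hi⟩) : P) 1).trans (one_mul _)).symm)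
  rw [this, hφ, hΘof, one_smul]
end

section
/- Let C be a closed subcategory of Mod-B with associated preradical r and a = r(B). Then r is exact if and only if a² = a and M·a = M for every module M in C. -/
/-!
Statement 6.  Let `C` be a closed subcategory of the category of (right) `B`-modules
with associated preradical `r` and `a = r B`.  Then `r` is exact if and only if
`a² = a` and `M·a = M` for every module `M` in `C`.  (Formalized for left modules;
exactness of the left exact preradical `r` is expressed by preservation of
epimorphisms, and `M·a = M` becomes `a • M = ⊤`.)
-/

universe u

open DirectSum

/-- The image of a submodule belonging to `C` again belongs to `C`. -/
lemma ClosedSubcategory.mem_map {B : Type u} [Ring B] (C : ClosedSubcategory B)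
    {M N : Type u} [AddCommGroup M] [Module B M] [AddCommGroup N] [Module B N]
    (f : M →ₗ[B] N) (S : Submodule B M) (hS : C.Mem S) : C.Mem (S.map f) := by
  have h : LinearMap.range (f.comp S.subtype) = S.map f := by
    rw [LinearMap.range_comp, Submodule.range_subtype]
  have h2 : C.Mem (LinearMap.range (f.comp S.subtype)) :=
    C.mem_congr (LinearMap.quotKerEquivRange (f.comp S.subtype))
      (C.mem_quotient (LinearMap.ker (f.comp S.subtype)) hS)
  rwa [h] at h2

theorem stmt6 {B : Type u} [Ring B] (C : ClosedSubcategory B)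
    (r : ∀ (M : Type u) [AddCommGroup M] [Module B M], Submodule B M)
    (hmem : ∀ (M : Type u) [AddCommGroup M] [Module B M], C.Mem (r M))
    (hmax : ∀ (M : Type u) [AddCommGroup M] [Module B M] (N : Submodule B M),
      C.Mem N → N ≤ r M) :
    -- `r` is exact ...
    (∀ (M N : Type u) [AddCommGroup M] [Module B M] [AddCommGroup N] [Module B N]
        (f : M →ₗ[B] N), Function.Surjective f → (r M).map f = r N) ↔
      -- ... iff `a² = a` and `M·a = M` for every `M` in `C`.
      (Submodule.span B {z : B | ∃ u ∈ r B, ∃ v ∈ r B, z = u * v} = r B ∧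
        ∀ (M : Type u) [AddCommGroup M] [Module B M], C.Mem M →
          idealSMul (r B) M = ⊤) := by
  classical
  constructor
  · intro hexact
    -- first: `a • M = ⊤` for every `M` in `C`
    have key : ∀ (M : Type u) [AddCommGroup M] [Module B M], C.Mem M →
        idealSMul (r B) M = ⊤ := by
      intro M _ _ hM
      -- `r M = ⊤` since `M ∈ C`
      have hrM : r M = ⊤ :=
        le_antisymm le_top (hmax M ⊤ (C.mem_congr (Submodule.topEquiv (R := B) (M := M)).symm hM))
      -- free cover of `M`
      set F := ⨁ _ : M, B with hF
      set f : F →ₗ[B] M := DirectSum.toModule B M M (fun m => LinearMap.toSpanSingleton B M m)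
        with hfdef
      have hsurj : Function.Surjective f := by
        intro m
        refine ⟨DirectSum.lof B M (fun _ => B) m 1, ?_⟩
        rw [hfdef, DirectSum.toModule_lof]
        simp
      have hmap := hexact F M f hsurj
      rw [hrM] at hmap
      rw [eq_top_iff]
      intro m _
      have hm : m ∈ (r F).map f := hmap.ge Submodule.mem_top
      obtain ⟨x, hx, rfl⟩ := hm
      -- each component of `x` lies in `a = r B`
      have hcomp : ∀ i : M, x i ∈ r B := by
        intro i
        have h1 : C.Mem ((r F).map (DirectSum.component B M (fun _ => B) i)) :=
          C.mem_map _ _ (hmem F)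
        have h2 := hmax B _ h1
        exact h2 (Submodule.mem_map_of_mem hx)
      -- write `f x` as a finite sum of elements `x i • i`
      rw [← DirectSum.sum_support_of x, map_sum]
      apply Submodule.sum_mem
      intro i _
      have hfi : f (DirectSum.of (fun _ : M => B) i (x i)) = (x i) • i := by
        rw [← DirectSum.lof_eq_of B, hfdef, DirectSum.toModule_lof]
        simp
      rw [hfi]
      exact Submodule.subset_span ⟨x i, hcomp i, i, rfl⟩
    refine ⟨?_, key⟩
    -- now `a² = a`
    set T := Submodule.span B {z : B | ∃ u ∈ r B, ∃ v ∈ r B, z = u * v} with hT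
    have hTa : T ≤ r B := by
      rw [hT, Submodule.span_le]
      rintro z ⟨u, hu, v, hv, rfl⟩
      exact (r B).smul_mem u hv
    -- consider the quotient `P = a / a²`
    set S : Submodule B ↥(r B) := T.comap (r B).subtype with hS
    have hP : C.Mem (↥(r B) ⧸ S) := C.mem_quotient S (hmem B)
    have h1 : idealSMul (r B) (↥(r B) ⧸ S) = ⊤ := key _ hP
    have h2 : idealSMul (r B) (↥(r B) ⧸ S) = ⊥ := by
      rw [idealSMul, Submodule.span_eq_bot]
      rintro z ⟨x, hx, p, rfl⟩
      obtain ⟨y, rfl⟩ := Submodule.Quotient.mk_surjective S p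
      rw [← Submodule.Quotient.mk_smul, Submodule.Quotient.mk_eq_zero]
      show ((x • y : ↥(r B)) : B) ∈ T
      exact Submodule.subset_span ⟨x, hx, ↑y, y.2, rfl⟩
    -- hence the quotient is trivial and `a ≤ a²`
    refine le_antisymm hTa ?_
    intro z hz
    have hz0 : (Submodule.Quotient.mk (⟨z, hz⟩ : ↥(r B)) : ↥(r B) ⧸ S) = 0 := by
      have hmem0 : (Submodule.Quotient.mk (⟨z, hz⟩ : ↥(r B)) : ↥(r B) ⧸ S) ∈
          idealSMul (r B) (↥(r B) ⧸ S) := h1.ge Submodule.mem_top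
      rw [h2] at hmem0
      simpa using hmem0
    rw [Submodule.Quotient.mk_eq_zero] at hz0
    exact hz0
  · rintro ⟨-, hM⟩ M N _ _ _ _ f hf
    apply le_antisymm
    · exact hmax N _ (C.mem_map f (r M) (hmem M))
    · -- `r N ≤ (r M).map f`
      intro n hn
      have htop := hM (↥(r N)) (hmem N)
      set K : Submodule B ↥(r N) := ((r M).map f).comap (r N).subtype with hK
      have hKle : idealSMul (r B) ↥(r N) ≤ K := by
        rw [idealSMul, Submodule.span_le]
        rintro z ⟨x, hx, m, rfl⟩
        obtain ⟨m', hm'⟩ := hf ↑m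
        have hsm : x • m' ∈ r M := by
          have h1 : C.Mem ((r B).map (LinearMap.toSpanSingleton B M m')) :=
            C.mem_map _ _ (hmem B)
          have h2 := hmax M _ h1
          exact h2 ⟨x, hx, by simp⟩
        show ((x • m : ↥(r N)) : N) ∈ (r M).map f
        refine ⟨x • m', hsm, ?_⟩
        rw [map_smul, hm']
        rfl
      have hmemK : (⟨n, hn⟩ : ↥(r N)) ∈ K := hKle (htop.ge Submodule.mem_top)
      exact hmemK
end

section
/- Let r be an exact preradical on Mod-B associated to a closed subcategory C, a = r(B), and M a module in C with injective hull E_C(M) computed in the category C. Then the map ζ_M : M → Hom_B(a, E_C(M)) given by ζ_M(m)(x) = m·x is an injective essential right B-module homomorphism whose codomain is an injective right B-module; hence ζ_M is an injective envelope of M in Mod-B. -/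
/-!
Statement 7.  Let `r` be an exact preradical on the category of (right) `B`-modules
associated to a closed subcategory `C`, `a = r B`, and `M` a module in `C` with
injective hull `E_C(M)` computed in `C`.  Then the map `ζ_M : M → Hom_B(a, E_C(M))`
given by `ζ_M(m)(x) = m·x` is an injective essential `B`-module homomorphism whose
codomain is an injective `B`-module; hence `ζ_M` is an injective envelope of `M` in
the category of all `B`-modules.  (Formalized for left modules: `ζ m x = x • m`, and
the injective hull is given as data: an embedding `ι : M → E` with essential range,
`E` in `C` and injective as an object of `C`.)
-/

universe u

open DirectSum

variable {B : Type u} [Ring B]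

section Helpers

variable (C : ClosedSubcategory B)
    (r : ∀ (M : Type u) [AddCommGroup M] [Module B M], Submodule B M)

/-- If `N` is in `C` then `r N = ⊤`. -/
theorem rEqTop
    (hmax : ∀ (M : Type u) [AddCommGroup M] [Module B M] (N : Submodule B M),
      C.Mem N → N ≤ r M)
    {N : Type u} [AddCommGroup N] [Module B N] (hN : C.Mem N) : r N = ⊤ :=
  top_le_iff.mp (hmax N ⊤ (C.mem_congr (Submodule.topEquiv (R := B) (M := N)).symm hN))

/-- Local units: for `N` in `C` and `m : N`, there is `x ∈ a = r B` with `x • m = m`. -/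
theorem localUnit
    (hmax : ∀ (M : Type u) [AddCommGroup M] [Module B M] (N : Submodule B M),
      C.Mem N → N ≤ r M)
    (hexact : ∀ {M N : Type u} [AddCommGroup M] [Module B M] [AddCommGroup N] [Module B N]
      (f : M →ₗ[B] N), Function.Surjective f → (r M).map f = r N)
    {N : Type u} [AddCommGroup N] [Module B N] (hN : C.Mem N) (m : N) :
    ∃ x ∈ r B, x • m = m := by
  set f : B →ₗ[B] N := LinearMap.toSpanSingleton B N m with hf
  have hm : m ∈ LinearMap.range f := ⟨1, by simp [hf]⟩
  have hmem' : (⟨m, hm⟩ : ↥(LinearMap.range f)) ∈ (r B).map f.rangeRestrict := by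
    rw [hexact f.rangeRestrict f.surjective_rangeRestrict,
      rEqTop C r hmax (C.mem_submodule (LinearMap.range f) hN)]
    trivial
  obtain ⟨x, hx, hfx⟩ := hmem'
  refine ⟨x, hx, ?_⟩
  have := congrArg Subtype.val hfx
  simpa [hf] using this

/-- Common local units for a finite family of elements of `a = r B`. -/
theorem commonUnit
    (hmem : ∀ (M : Type u) [AddCommGroup M] [Module B M], C.Mem (r M))
    (hmax : ∀ (M : Type u) [AddCommGroup M] [Module B M] (N : Submodule B M),
      C.Mem N → N ≤ r M)
    (hexact : ∀ {M N : Type u} [AddCommGroup M] [Module B M] [AddCommGroup N] [Module B N]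
      (f : M →ₗ[B] N), Function.Surjective f → (r M).map f = r N) :
    ∀ l : List B, (∀ u ∈ l, u ∈ r B) → ∃ w ∈ r B, ∀ u ∈ l, w * u = u := by
  intro l
  induction l with
  | nil => exact fun _ => ⟨0, (r B).zero_mem, fun u hu => absurd hu List.not_mem_nil⟩
  | cons u t ih =>
    intro hl
    have hu : u ∈ r B := hl u List.mem_cons_self
    obtain ⟨w₂, hw₂a, hw₂⟩ := ih fun v hv => hl v (List.mem_cons_of_mem u hv)
    have hu' : u - w₂ * u ∈ r B := by
      have : w₂ * u ∈ r B := by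
        simpa [smul_eq_mul] using (r B).smul_mem w₂ hu
      exact (r B).sub_mem hu this
    obtain ⟨w₁, hw₁a, hw₁⟩ :=
      localUnit C r hmax hexact (hmem B) (⟨u - w₂ * u, hu'⟩ : ↥(r B))
    have hw₁' : w₁ * (u - w₂ * u) = u - w₂ * u := congrArg Subtype.val hw₁
    refine ⟨w₂ + w₁ - w₁ * w₂, ?_, ?_⟩
    · have h1 : w₁ * w₂ ∈ r B := by
        simpa [smul_eq_mul] using (r B).smul_mem w₁ hw₂a
      exact (r B).sub_mem ((r B).add_mem hw₂a hw₁a) h1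
    · intro v hv
      rcases List.mem_cons.mp hv with rfl | hv
      · have : w₁ * v - w₁ * (w₂ * v) = v - w₂ * v := by
          simpa [mul_sub] using hw₁'
        calc (w₂ + w₁ - w₁ * w₂) * v
            = w₂ * v + (w₁ * v - w₁ * (w₂ * v)) := by noncomm_ring
          _ = w₂ * v + (v - w₂ * v) := by rw [this]
          _ = v := by abel
      · have h2 : w₂ * v = v := hw₂ v hv
        calc (w₂ + w₁ - w₁ * w₂) * v
            = w₂ * v + (w₁ * v - w₁ * (w₂ * v)) := by noncomm_ring
          _ = v + (w₁ * v - w₁ * v) := by rw [h2]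
          _ = v := by abel

end Helpers

theorem stmt7 (C : ClosedSubcategory B)
    (r : ∀ (M : Type u) [AddCommGroup M] [Module B M], Submodule B M)
    (hmem : ∀ (M : Type u) [AddCommGroup M] [Module B M], C.Mem (r M))
    (hmax : ∀ (M : Type u) [AddCommGroup M] [Module B M] (N : Submodule B M),
      C.Mem N → N ≤ r M)
    (hexact : ∀ {M N : Type u} [AddCommGroup M] [Module B M] [AddCommGroup N] [Module B N]
      (f : M →ₗ[B] N), Function.Surjective f → (r M).map f = r N)
    -- (automatic) two-sidedness of `a = r B`:
    (h2 : ∀ x ∈ r B, ∀ b : B, x * b ∈ r B)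
    -- `M` is an object of `C`:
    (M : Type u) [AddCommGroup M] [Module B M] (hM : C.Mem M)
    -- `E = E_C(M)` is an injective hull of `M` in `C`:
    (E : Type u) [AddCommGroup E] [Module B E] (hEC : C.Mem E) (hEinj : InjectiveIn C E)
    (ι : M →ₗ[B] E) (hι : Function.Injective ι)
    (hess : ∀ K : Submodule B E, K ⊓ LinearMap.range ι = ⊥ → K = ⊥) :
    -- the canonical map `ζ : M → Hom_B(a, E)`, `ζ m x = x • m`, is a `B`-linear
    -- injective essential map into an injective `B`-module:
    ∃ ζ : M →ₗ[B] THom (r B) h2 E,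
      (∀ (m : M) (x : ↥(r B)), (ζ m).toLin x = ι ((x : B) • m)) ∧
      Function.Injective ζ ∧
      (∀ K : Submodule B (THom (r B) h2 E), K ⊓ LinearMap.range ζ = ⊥ → K = ⊥) ∧
      Module.Injective B (THom (r B) h2 E) := by
  classical
  -- the canonical map ζ
  let ζ : M →ₗ[B] THom (r B) h2 E :=
    { toFun := fun m =>
        (ι.comp ((LinearMap.toSpanSingleton B M m).comp (r B).subtype) : ↥(r B) →ₗ[B] E)
      map_add' := fun m n => THom.ext' fun x => by
        show ι ((x : B) • (m + n)) = ι ((x : B) • m) + ι ((x : B) • n)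
        rw [smul_add, map_add]
      map_smul' := fun b m => THom.ext' fun x => by
        show ι ((x : B) • b • m) = ι (((x : B) * b) • m)
        rw [mul_smul] }
  have hζ : ∀ (m : M) (x : ↥(r B)), (ζ m).toLin x = ι ((x : B) • m) := fun m x => rfl
  -- injectivity of ζ
  have hker : ∀ m : M, ζ m = 0 → m = 0 := by
    intro m hm
    obtain ⟨x, hx, hxm⟩ := localUnit C r hmax hexact hM m
    have h0 : ι ((x : B) • m) = 0 := by
      rw [← hζ m ⟨x, hx⟩, hm]; rfl
    have : (x : B) • m = 0 := by
      apply hι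
      rw [h0, map_zero]
    rw [← hxm, this]
  have hinj : Function.Injective ζ :=
    LinearMap.ker_eq_bot.mp (LinearMap.ker_eq_bot'.mpr hker)
  -- essentiality of the range of ι, pointwise form
  have hessE : ∀ e : E, e ≠ 0 → ∃ c : B, c • e ≠ 0 ∧ c • e ∈ LinearMap.range ι := by
    intro e he
    by_contra hcon
    push_neg at hcon
    have hbot : (B ∙ e) ⊓ LinearMap.range ι = ⊥ := by
      rw [eq_bot_iff]
      rintro z ⟨hz1, hz2⟩
      obtain ⟨c, rfl⟩ := Submodule.mem_span_singleton.mp hz1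
      by_cases hc : c • e = 0
      · simpa [hc] using Submodule.zero_mem ⊥
      · exact absurd hz2 (hcon c hc)
    have h0 : e ∈ (B ∙ e) := Submodule.mem_span_singleton_self e
    rw [hess _ hbot, Submodule.mem_bot] at h0
    exact he h0
  -- essentiality of ζ
  have hessζ : ∀ K : Submodule B (THom (r B) h2 E), K ⊓ LinearMap.range ζ = ⊥ → K = ⊥ := by
    intro K hK
    rw [eq_bot_iff]
    intro f hfK
    rw [Submodule.mem_bot]
    by_contra hf0
    have hu : ∃ u : ↥(r B), f.toLin u ≠ 0 := by
      by_contra h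
      push_neg at h
      exact hf0 (THom.ext' fun x => by rw [h x]; rfl)
    obtain ⟨u, hu⟩ := hu
    obtain ⟨c, hc0, m, hcm⟩ := hessE (f.toLin u) hu
    have hm0 : m ≠ 0 := by
      rintro rfl
      rw [map_zero] at hcm
      exact hc0 hcm.symm
    have hb : c * (u : B) ∈ r B := by
      simpa [smul_eq_mul] using (r B).smul_mem c u.2
    have hbf : (c * (u : B)) • f = ζ m := by
      refine THom.ext' fun x => ?_
      rw [THom.smul_apply, hζ]
      have h1 : (⟨(x : B) * (c * (u : B)), h2 x x.2 _⟩ : ↥(r B))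
          = ((x : B) * c) • u := Subtype.ext (by simp [smul_eq_mul, mul_assoc])
      rw [h1, map_smul]
      show ((x : B) * c) • f.toLin u = ι ((x : B) • m)
      rw [map_smul, hcm, ← mul_smul]
    have hmem : (c * (u : B)) • f ∈ K ⊓ LinearMap.range ζ :=
      ⟨K.smul_mem _ hfK, ⟨m, hbf.symm⟩⟩
    rw [hK, Submodule.mem_bot] at hmem
    exact hm0 (hker m (by rw [← hbf, hmem]))
  refine ⟨ζ, hζ, hinj, hessζ, ?_⟩
  -- injectivity of THom (r B) h2 E via Baer's criterion
  refine Module.Baer.injective ?_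
  intro I g
  -- the free presentation of the ideal J = a·I
  set T := (↥(r B) × ↥I) with hT
  set Θ : (T →₀ B) →ₗ[B] B :=
    Finsupp.linearCombination B (fun p : T => (p.1 : B) * (p.2 : B)) with hΘ
  set Φ : (T →₀ B) →ₗ[B] E :=
    Finsupp.linearCombination B (fun p : T => (g p.2).toLin p.1) with hΦ
  set J : Submodule B B := LinearMap.range Θ with hJ
  have hJle : J ≤ r B := by
    rintro _ ⟨fs, rfl⟩
    rw [hΘ, Finsupp.linearCombination_apply]
    refine Submodule.sum_mem _ fun p _ => ?_
    simpa [smul_eq_mul, mul_assoc] using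
      (r B).smul_mem (fs p) (h2 (p.1 : B) p.1.2 (p.2 : B))
  -- Θ f = 0 → Φ f = 0, using common local units
  have hkerle : LinearMap.ker Θ ≤ LinearMap.ker Φ := by
    intro fs hfs
    rw [LinearMap.mem_ker] at hfs ⊢
    obtain ⟨w, hwa, hw⟩ := commonUnit C r hmem hmax hexact
      (fs.support.toList.map fun p => fs p * (p.1 : B))
      (by
        intro v hv
        obtain ⟨p, _, rfl⟩ := List.mem_map.mp hv
        simpa [smul_eq_mul] using (r B).smul_mem (fs p) p.1.2)
    have hw' : ∀ p ∈ fs.support, w * (fs p * (p.1 : B)) = fs p * (p.1 : B) := by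
      intro p hp
      exact hw _ (List.mem_map_of_mem (Finset.mem_toList.mpr hp))
    -- evaluation at w as an additive monoid hom
    let ev : THom (r B) h2 E →+ E :=
      AddMonoidHom.mk' (fun q => q.toLin ⟨w, hwa⟩) (fun q₁ q₂ => rfl)
    have hterm : ∀ p ∈ fs.support,
        fs p • (g p.2).toLin p.1 = ev (g ((fs p * (p.1 : B)) • p.2)) := by
      intro p hp
      have h1 : g ((fs p * (p.1 : B)) • p.2) = (fs p * (p.1 : B)) • g p.2 :=
        map_smul g _ _
      have h2' : ev ((fs p * (p.1 : B)) • g p.2)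
          = (g p.2).toLin ⟨w * (fs p * (p.1 : B)), h2 w hwa _⟩ := rfl
      rw [h1, h2']
      have h3 : (⟨w * (fs p * (p.1 : B)), h2 w hwa _⟩ : ↥(r B)) = fs p • p.1 :=
        Subtype.ext (by simp [smul_eq_mul, hw' p hp])
      rw [h3, map_smul]
    have hΦfs : Φ fs = ∑ p ∈ fs.support, fs p • (g p.2).toLin p.1 := by
      rw [hΦ, Finsupp.linearCombination_apply]; rfl
    have hz : (∑ p ∈ fs.support, (fs p * (p.1 : B)) • p.2 : ↥I) = 0 := by
      refine Subtype.ext ?_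
      push_cast
      show _ = (0:B)
      have h6 : ∀ p ∈ fs.support,
          (fs p * (p.1 : B)) • (p.2 : B) = fs p • ((p.1 : B) * (p.2 : B)) := by
        intro p _
        rw [smul_eq_mul, smul_eq_mul, mul_assoc]
      rw [Finset.sum_congr rfl h6]
      have h7 : Θ fs = 0 := hfs
      rw [hΘ, Finsupp.linearCombination_apply, Finsupp.sum] at h7
      exact h7
    calc Φ fs = ∑ p ∈ fs.support, ev (g ((fs p * (p.1 : B)) • p.2)) := by
          rw [hΦfs]; exact Finset.sum_congr rfl hterm
      _ = (ev.comp g.toAddMonoidHom) (∑ p ∈ fs.support, (fs p * (p.1 : B)) • p.2) := by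
          rw [map_sum]; rfl
      _ = 0 := by rw [hz, map_zero]
  -- the induced map φ : J → E
  let φ : ↥J →ₗ[B] E :=
    (Submodule.liftQ (LinearMap.ker Θ) Φ hkerle).comp
      Θ.quotKerEquivRange.symm.toLinearMap
  have hφ : ∀ fs : T →₀ B, φ ⟨Θ fs, ⟨fs, rfl⟩⟩ = Φ fs := by
    intro fs
    show (Submodule.liftQ (LinearMap.ker Θ) Φ hkerle)
        (Θ.quotKerEquivRange.symm ⟨Θ fs, ⟨fs, rfl⟩⟩) = Φ fs
    rw [Θ.quotKerEquivRange_symm_apply_image fs ⟨fs, rfl⟩]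
    rw [Submodule.mkQ_apply, Submodule.liftQ_apply]
  -- J is in C
  have hmemJ : C.Mem ↥J :=
    C.mem_congr (Submodule.comapSubtypeEquivOfLe hJle)
      (C.mem_submodule (Submodule.comap (r B).subtype J) (hmem B))
  -- extend φ along J ↪ a using injectivity of E in C
  obtain ⟨f₀, hf₀⟩ := hEinj (↥J) (↥(r B)) hmemJ (hmem B)
    (Submodule.inclusion hJle) (Submodule.inclusion_injective hJle) φ
  refine ⟨LinearMap.toSpanSingleton B (THom (r B) h2 E) f₀, ?_⟩
  intro x hx
  show x • (show THom (r B) h2 E from f₀) = g ⟨x, hx⟩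
  refine THom.ext' fun uₐ => ?_
  rw [THom.smul_apply]
  have hΘs : Θ (Finsupp.single (⟨uₐ, (⟨x, hx⟩ : ↥I)⟩ : T) 1) = (uₐ : B) * x := by
    rw [hΘ, Finsupp.linearCombination_single, one_smul]
  have hmemJ' : (uₐ : B) * x ∈ J := ⟨Finsupp.single (⟨uₐ, ⟨x, hx⟩⟩ : T) 1, hΘs⟩
  have h4 : (⟨(uₐ : B) * x, h2 uₐ uₐ.2 x⟩ : ↥(r B))
      = Submodule.inclusion hJle ⟨(uₐ : B) * x, hmemJ'⟩ := Subtype.ext rfl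
  show f₀ ⟨(uₐ : B) * x, h2 uₐ uₐ.2 x⟩ = (g ⟨x, hx⟩).toLin uₐ
  rw [h4, hf₀]
  have h5 : (⟨(uₐ : B) * x, hmemJ'⟩ : ↥J)
      = ⟨Θ (Finsupp.single (⟨uₐ, ⟨x, hx⟩⟩ : T) 1),
          ⟨Finsupp.single (⟨uₐ, ⟨x, hx⟩⟩ : T) 1, rfl⟩⟩ := Subtype.ext hΘs.symm
  rw [h5, hφ, hΦ, Finsupp.linearCombination_single, one_smul]
end

section
/- Let r be an exact preradical on Mod-B associated to a closed subcategory C, a = r(B), and M a module in C. Then M is injective in Mod-B if and only if M is injective in C and the canonical map ζ_M : M → Hom_B(a, E_C(M)), ζ_M(m)(x) = m·x, is an isomorphism. -/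
/-!
Statement 8.  Let `r` be an exact preradical on the category of (right) `B`-modules
associated to a closed subcategory `C`, `a = r B`, and `M` a module in `C`.  Then `M`
is injective in the category of all `B`-modules if and only if `M` is injective in `C`
and the canonical map `ζ_M : M → Hom_B(a, E_C(M))`, `ζ_M(m)(x) = m·x`, is an
isomorphism.  (Formalized for left modules: `ζ m x = x • m`; the injective hull
`E_C(M)` in `C` is given as data.)
-/

universe u

open DirectSum

variable {B : Type u} [Ring B]

/-- Key lemma: if `N` belongs to `C`, then every `n : N` satisfies `n ∈ (r B) • n`,
more precisely there is `x ∈ r B` with `x • n = n`. -/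
theorem key_exists (C : ClosedSubcategory B)
    (r : ∀ (M : Type u) [AddCommGroup M] [Module B M], Submodule B M)
    (hmax : ∀ (M : Type u) [AddCommGroup M] [Module B M] (N : Submodule B M),
      C.Mem N → N ≤ r M)
    (hexact : ∀ {M N : Type u} [AddCommGroup M] [Module B M] [AddCommGroup N] [Module B N]
      (f : M →ₗ[B] N), Function.Surjective f → (r M).map f = r N)
    {N : Type u} [AddCommGroup N] [Module B N] (hN : C.Mem N) (n : N) :
    ∃ x ∈ r B, x • n = n := by
  set R : Submodule B N := Submodule.span B {n} with hRdef
  have hmemn : n ∈ R := Submodule.mem_span_singleton_self n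
  have hRC : C.Mem ↥R := C.mem_submodule R hN
  have hRtop : C.Mem ↥(⊤ : Submodule B ↥R) :=
    C.mem_congr (Submodule.topEquiv (R := B) (M := ↥R)).symm hRC
  have htop : r ↥R = ⊤ := top_le_iff.mp (hmax ↥R ⊤ hRtop)
  set φ : B →ₗ[B] ↥R := LinearMap.toSpanSingleton B ↥R ⟨n, hmemn⟩ with hφdef
  have hsurj : Function.Surjective φ := by
    rintro ⟨y, hy⟩
    obtain ⟨c, hc⟩ := Submodule.mem_span_singleton.mp hy
    exact ⟨c, Subtype.ext (by simpa [hφdef, LinearMap.toSpanSingleton_apply] using hc)⟩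
  have hmap := hexact φ hsurj
  have hmem' : (⟨n, hmemn⟩ : ↥R) ∈ (r B).map φ := by
    rw [hmap, htop]; trivial
  obtain ⟨x, hx, hφx⟩ := hmem'
  refine ⟨x, hx, ?_⟩
  have := congrArg Subtype.val hφx
  simpa [hφdef, LinearMap.toSpanSingleton_apply] using this

theorem key_zero (C : ClosedSubcategory B)
    (r : ∀ (M : Type u) [AddCommGroup M] [Module B M], Submodule B M)
    (hmax : ∀ (M : Type u) [AddCommGroup M] [Module B M] (N : Submodule B M),
      C.Mem N → N ≤ r M)
    (hexact : ∀ {M N : Type u} [AddCommGroup M] [Module B M] [AddCommGroup N] [Module B N]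
      (f : M →ₗ[B] N), Function.Surjective f → (r M).map f = r N)
    {N : Type u} [AddCommGroup N] [Module B N] (hN : C.Mem N) (n : N)
    (h : ∀ x ∈ r B, x • n = 0) : n = 0 := by
  obtain ⟨x, hx, hxn⟩ := key_exists C r hmax hexact hN n
  rw [← hxn]
  exact h x hx

/-- The canonical map `ζ : M → Hom_B(a, E)`, `ζ m x = ι (x • m)`, as a linear map. -/
def zetaMap {a : Ideal B} (h2 : ∀ x ∈ a, ∀ b : B, x * b ∈ a)
    {M E : Type u} [AddCommGroup M] [Module B M] [AddCommGroup E] [Module B E]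
    (ι : M →ₗ[B] E) : M →ₗ[B] THom a h2 E where
  toFun m :=
    { toFun := fun x => ι ((x : B) • m)
      map_add' := fun x y => by simp [add_smul]
      map_smul' := fun c x => by
        show ι (((c • x : ↥a) : B) • m) = c • ι ((x : B) • m)
        rw [← map_smul]
        congr 1
        simp [smul_smul] }
  map_add' m m' := THom.ext' fun x => by
    show ι ((x : B) • (m + m')) = ι ((x : B) • m) + ι ((x : B) • m')
    rw [smul_add, map_add]
  map_smul' b m := THom.ext' fun x => by
    show ι ((x : B) • b • m) = ι (((x : B) * b) • m)
    rw [← mul_smul]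

theorem stmt8 (C : ClosedSubcategory B)
    (r : ∀ (M : Type u) [AddCommGroup M] [Module B M], Submodule B M)
    (hmem : ∀ (M : Type u) [AddCommGroup M] [Module B M], C.Mem (r M))
    (hmax : ∀ (M : Type u) [AddCommGroup M] [Module B M] (N : Submodule B M),
      C.Mem N → N ≤ r M)
    (hexact : ∀ {M N : Type u} [AddCommGroup M] [Module B M] [AddCommGroup N] [Module B N]
      (f : M →ₗ[B] N), Function.Surjective f → (r M).map f = r N)
    -- (automatic) two-sidedness of `a = r B`:
    (h2 : ∀ x ∈ r B, ∀ b : B, x * b ∈ r B)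
    -- `M` is an object of `C`:
    (M : Type u) [AddCommGroup M] [Module B M] (hM : C.Mem M)
    -- `E = E_C(M)` is an injective hull of `M` in `C`:
    (E : Type u) [AddCommGroup E] [Module B E] (hEC : C.Mem E) (hEinj : InjectiveIn C E)
    (ι : M →ₗ[B] E) (hι : Function.Injective ι)
    (hess : ∀ K : Submodule B E, K ⊓ LinearMap.range ι = ⊥ → K = ⊥) :
    -- `M` is an injective `B`-module iff it is injective in `C` and the canonical
    -- map `ζ : M → Hom_B(a, E)`, `ζ m x = x • m`, is an isomorphism:
    Module.Injective B M ↔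
      (InjectiveIn C M ∧
        ∃ ζ : M →ₗ[B] THom (r B) h2 E,
          (∀ (m : M) (x : ↥(r B)), (ζ m).toLin x = ι ((x : B) • m)) ∧
            Function.Bijective ζ) := by
  constructor
  · -- forward direction
    intro hInj
    have hMC : InjectiveIn C M := fun P Q _ _ _ _ _ _ f hf g => hInj.out f hf g
    -- a retraction `π : E → M` of `ι`
    obtain ⟨π, hπ⟩ := hInj.out ι hι LinearMap.id
    have hπinj : Function.Injective π := by
      have hker : LinearMap.ker π = ⊥ := by
        apply hess
        rw [eq_bot_iff]
        rintro e he
        rw [Submodule.mem_inf] at he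
        obtain ⟨h1, m, rfl⟩ := he
        have hm0 : m = 0 := by
          have := hπ m
          simp only [LinearMap.id_apply] at this
          rw [← this]
          exact LinearMap.mem_ker.mp h1
        simp [hm0]
      exact LinearMap.ker_eq_bot.mp hker
    have hιπ : ∀ e, ι (π e) = e := fun e => hπinj (by
      have := hπ (π e); simpa using this)
    refine ⟨hMC, zetaMap h2 ι, fun m x => rfl, ?_, ?_⟩
    · -- injectivity of ζ
      intro m m' hmm'
      have hdiff : ∀ x ∈ r B, x • (m - m') = 0 := by
        intro x hx
        have hx' := congrArg (fun F => THom.toLin F ⟨x, hx⟩) hmm'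
        have : ι (x • m) = ι (x • m') := hx'
        have := hι this
        rw [smul_sub, this, sub_self]
      have := key_zero C r hmax hexact hM (m - m') hdiff
      exact sub_eq_zero.mp this
    · -- surjectivity of ζ
      intro F
      obtain ⟨G, hG⟩ := hInj.out (r B).subtype Subtype.val_injective (π ∘ₗ F.toLin)
      refine ⟨G 1, THom.ext' fun x => ?_⟩
      show ι ((x : B) • G 1) = F.toLin x
      have h1 : (x : B) • G 1 = π (F.toLin x) := by
        rw [← map_smul, smul_eq_mul, mul_one]
        exact hG x
      rw [h1, hιπ]
  · -- backward direction
    rintro ⟨hMinj, ζ, hζ, hζinj, hζsurj⟩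
    refine Module.Baer.injective ?_
    intro I f
    set J : Ideal B := r B • I with hJdef
    have hJle_a : J ≤ r B := Submodule.smul_le.mpr fun x hx i hi => by
      simpa [smul_eq_mul] using h2 x hx i
    have hJleI : J ≤ I := Submodule.smul_le.mpr fun x hx i hi =>
      Submodule.smul_mem I x hi
    have hJC : C.Mem ↥J :=
      C.mem_congr (Submodule.comapSubtypeEquivOfLe hJle_a)
        (C.mem_submodule (Submodule.comap (r B).subtype J) (hmem B))
    obtain ⟨g, hg⟩ := hMinj ↥J ↥(r B) hJC (hmem B) (Submodule.inclusion hJle_a)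
      (Submodule.inclusion_injective hJle_a) (f ∘ₗ Submodule.inclusion hJleI)
    obtain ⟨m₀, hm₀⟩ := hζsurj (ι ∘ₗ g : THom (r B) h2 E)
    have hgx : ∀ x : ↥(r B), g x = (x : B) • m₀ := by
      intro x
      apply hι
      have e1 : (ζ m₀).toLin x = ι (g x) := congrArg (fun F => THom.toLin F x) hm₀
      rw [← e1, hζ m₀ x]
    refine ⟨LinearMap.toSpanSingleton B M m₀, fun i hi => ?_⟩
    have hkey : ∀ x ∈ r B, x • (f ⟨i, hi⟩ - i • m₀) = 0 := by
      intro x hx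
      have hxiJ : x * i ∈ J := by
        simpa [smul_eq_mul, hJdef] using Submodule.smul_mem_smul hx hi
      have h1 : f ⟨x * i, hJleI hxiJ⟩ = x • f ⟨i, hi⟩ := by
        have hcoe : (⟨x * i, hJleI hxiJ⟩ : ↥I) = x • ⟨i, hi⟩ :=
          Subtype.ext (by simp [smul_eq_mul])
        rw [hcoe, map_smul]
      have h2' : f ⟨x * i, hJleI hxiJ⟩ = (x * i) • m₀ := by
        have := hg ⟨x * i, hxiJ⟩
        have hcoe : Submodule.inclusion hJle_a (⟨x * i, hxiJ⟩ : ↥J)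
            = (⟨x * i, hJle_a hxiJ⟩ : ↥(r B)) := rfl
        rw [hcoe] at this
        rw [hgx ⟨x * i, hJle_a hxiJ⟩] at this
        exact this.symm
      rw [smul_sub, ← h1, h2', mul_smul, sub_self]
    have hzero := key_zero C r hmax hexact hM (f ⟨i, hi⟩ - i • m₀) hkey
    have : f ⟨i, hi⟩ = i • m₀ := sub_eq_zero.mp hzero
    rw [LinearMap.toSpanSingleton_apply, this]
end

section
/- Let a be a two-sided ideal of B possessing a set E of commuting idempotents such that for every x ∈ a there is e ∈ E with xe = ex = x (a set of local units). If M is a right B-module annihilating into a (M·a = M) of finite support, i.e., there is a finite subset F ⊆ E with m·(Σ_{e∈F} e) = m for all m ∈ M, then every right B-linear map f : a → M is of the form f(x) = m·x for some m ∈ M. -/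
/-!
Statement 9.  Let `a` be a two-sided ideal of `B` possessing a set `E` of commuting
idempotents which is a set of local units (for every `x ∈ a` there is `e ∈ E` with
`xe = ex = x`).  If `M` is a `B`-module with `M·a = M` of finite support (there is a
finite `F ⊆ E` with `m·(∑_{e∈F} e) = m` for all `m ∈ M`), then every `B`-linear map
`f : a → M` is of the form `f x = m·x` for some `m ∈ M`.  (Formalized for left
modules, the mirror image: `M·a = M` becomes `a • M = ⊤`, `m·(∑ e) = m` becomes
`(∑ e) • m = m`, and the conclusion becomes `f x = x • m`.)
-/

universe u

theorem stmt9 {B : Type u} [Ring B] (a : Ideal B)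
    (h2 : ∀ x ∈ a, ∀ b : B, x * b ∈ a)
    (E : Set B) (hEa : E ⊆ (a : Set B))
    (hcomm : ∀ e ∈ E, ∀ f ∈ E, e * f = f * e)
    (hidem : ∀ e ∈ E, e * e = e)
    (hlocal : ∀ x ∈ a, ∃ e ∈ E, x * e = x ∧ e * x = x)
    (M : Type u) [AddCommGroup M] [Module B M]
    (hMa : idealSMul a M = ⊤)
    (F : Finset B) (hF : (F : Set B) ⊆ E)
    (hsupp : ∀ m : M, (∑ e ∈ F, e) • m = m) :
    ∀ f : ↥a →ₗ[B] M, ∃ m : M, ∀ x : ↥a, f x = (x : B) • m := by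
  intro f
  have hu : (∑ e ∈ F, e) ∈ a := Submodule.sum_mem _ fun e he => hEa (hF he)
  set u := ∑ e ∈ F, e with hudef
  refine ⟨f ⟨u, hu⟩, fun x => ?_⟩
  obtain ⟨e, heE, hxe, hex⟩ := hlocal x.1 x.2
  have heA : e ∈ a := hEa heE
  have heu : e * u = u * e := by
    simp only [hudef, Finset.sum_mul, Finset.mul_sum]
    exact Finset.sum_congr rfl fun g hg => hcomm e heE g (hF hg)
  have hfe : f ⟨e, heA⟩ = e • f ⟨u, hu⟩ := by
    calc f ⟨e, heA⟩ = u • f ⟨e, heA⟩ := (hsupp _).symm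
    _ = f (u • ⟨e, heA⟩) := (map_smul f u _).symm
    _ = f (e • ⟨u, hu⟩) := by congr 1; exact Subtype.ext heu.symm
    _ = e • f ⟨u, hu⟩ := map_smul f e _
  calc f x = f ((x : B) • ⟨e, heA⟩) := by congr 1; exact Subtype.ext hxe.symm
  _ = (x : B) • f ⟨e, heA⟩ := map_smul f _ _
  _ = (x : B) • e • f ⟨u, hu⟩ := by rw [hfe]
  _ = ((x : B) * e) • f ⟨u, hu⟩ := smul_smul _ _ _
  _ = (x : B) • f ⟨u, hu⟩ := by rw [hxe]
end

section
/- Let r be an exact preradical on Mod-B associated to a closed subcategory C, with a = r(B) admitting a set of local units. If M ∈ C has finite support, then M is injective in Mod-B if and only if M is injective in C. -/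
/-!
Statement 10.  Let `r` be an exact preradical on the category of (right) `B`-modules
associated to a closed subcategory `C`, with `a = r B` admitting a set of local units.
If `M ∈ C` has finite support, then `M` is injective in the category of all
`B`-modules if and only if `M` is injective in `C`.  (Formalized for left modules,
the mirror image.)
-/

universe u

open DirectSum

variable {B : Type u} [Ring B]

lemma aux_zorn {Et : Type u} [AddCommGroup Et] [Module B Et] (Mb : Submodule B Et) :
    ∃ N, Maximal (fun N : Submodule B Et => N ⊓ Mb = ⊥) N := by
  apply zorn_le₀
  intro c hc hchain
  rcases c.eq_empty_or_nonempty with rfl | hne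
  · exact ⟨⊥, show (⊥ : Submodule B Et) ⊓ Mb = ⊥ by simp, by simp⟩
  · refine ⟨sSup c, ?_, fun z hz => le_sSup hz⟩
    show sSup c ⊓ Mb = ⊥
    rw [Submodule.eq_bot_iff]
    intro x hx
    rw [Submodule.mem_inf] at hx
    obtain ⟨hx1, hx2⟩ := hx
    obtain ⟨N, hNc, hxN⟩ := (Submodule.mem_sSup_of_directed hne hchain.directedOn).1 hx1
    have h2 : x ∈ N ⊓ Mb := Submodule.mem_inf.2 ⟨hxN, hx2⟩
    rw [hc hNc] at h2
    simpa using h2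

lemma aux_mkQ_eq_zero {Et : Type u} [AddCommGroup Et] [Module B Et]
    (N : Submodule B Et) (x : Et) : N.mkQ x = 0 ↔ x ∈ N := by
  simp [Submodule.mkQ_apply, Submodule.Quotient.mk_eq_zero]

lemma aux_essential {Et : Type u} [AddCommGroup Et] [Module B Et]
    (Mb : Submodule B Et) {N : Submodule B Et}
    (hN : Maximal (fun N : Submodule B Et => N ⊓ Mb = ⊥) N) :
    ∀ z : Et ⧸ N, z ≠ 0 → ∃ b : B, b • z ∈ Mb.map N.mkQ ∧ b • z ≠ 0 := by
  intro z hz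
  obtain ⟨y, rfl⟩ := N.mkQ_surjective z
  have hyN : y ∉ N := fun h => hz ((aux_mkQ_eq_zero N y).2 h)
  have hne : ¬ ((N ⊔ Submodule.span B {y}) ⊓ Mb = ⊥) := by
    intro h
    have hle := hN.2 h le_sup_left
    exact hyN (hle (le_sup_right (a := N) (Submodule.mem_span_singleton_self y)))
  obtain ⟨x, hx, hx0⟩ : ∃ x, x ∈ (N ⊔ Submodule.span B {y}) ⊓ Mb ∧ x ≠ 0 := by
    by_contra h
    push_neg at h
    exact hne (Submodule.eq_bot_iff _ |>.2 h)
  rw [Submodule.mem_inf] at hx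
  obtain ⟨hx1, hxM⟩ := hx
  obtain ⟨n, hn, t, ht, rfl⟩ := Submodule.mem_sup.1 hx1
  obtain ⟨b, rfl⟩ := Submodule.mem_span_singleton.1 ht
  have e1 : b • (N.mkQ y) = N.mkQ (b • y) := (map_smul N.mkQ b y).symm
  have e2 : N.mkQ (n + b • y) = N.mkQ (b • y) := by
    rw [map_add, (aux_mkQ_eq_zero N n).2 hn, zero_add]
  refine ⟨b, ?_, ?_⟩
  · rw [e1, ← e2]
    exact Submodule.mem_map_of_mem hxM
  · intro h
    rw [e1, aux_mkQ_eq_zero] at h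
    have h3 : n + b • y ∈ N ⊓ Mb := Submodule.mem_inf.2 ⟨N.add_mem hn h, hxM⟩
    rw [hN.1] at h3
    exact hx0 (by simpa using h3)

lemma aux_smul_mem (C : ClosedSubcategory B)
    (r : ∀ (M : Type u) [AddCommGroup M] [Module B M], Submodule B M)
    (hmem : ∀ (M : Type u) [AddCommGroup M] [Module B M], C.Mem (r M))
    (hmax : ∀ (M : Type u) [AddCommGroup M] [Module B M] (N : Submodule B M),
      C.Mem N → N ≤ r M)
    (Y : Type u) [AddCommGroup Y] [Module B Y] (y : Y) {x : B} (hx : x ∈ r B) :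
    x • y ∈ r Y := by
  classical
  set ψ : (r B) →ₗ[B] Y := (LinearMap.toSpanSingleton B Y y).comp (r B).subtype with hψ
  have hS : C.Mem (LinearMap.range ψ) := by
    have h1 : C.Mem ((r B) ⧸ LinearMap.ker ψ) := C.mem_quotient _ (hmem B)
    exact C.mem_congr ψ.quotKerEquivRange h1
  have hle := hmax Y _ hS
  have hmem' : x • y ∈ LinearMap.range ψ :=
    ⟨⟨x, hx⟩, by simp [hψ, LinearMap.toSpanSingleton_apply]⟩
  exact hle hmem'

theorem stmt10 (C : ClosedSubcategory B)
    (r : ∀ (M : Type u) [AddCommGroup M] [Module B M], Submodule B M)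
    (hmem : ∀ (M : Type u) [AddCommGroup M] [Module B M], C.Mem (r M))
    (hmax : ∀ (M : Type u) [AddCommGroup M] [Module B M] (N : Submodule B M),
      C.Mem N → N ≤ r M)
    (hexact : ∀ {M N : Type u} [AddCommGroup M] [Module B M] [AddCommGroup N] [Module B N]
      (f : M →ₗ[B] N), Function.Surjective f → (r M).map f = r N)
    -- `a = r B` admits a set `E` of commuting idempotent local units:
    (E : Set B) (hEa : E ⊆ (r B : Set B))
    (hcomm : ∀ e ∈ E, ∀ f ∈ E, e * f = f * e)
    (hidem : ∀ e ∈ E, e * e = e)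
    (hlocal : ∀ x ∈ r B, ∃ e ∈ E, x * e = x ∧ e * x = x)
    -- `M ∈ C` has finite support:
    (M : Type u) [AddCommGroup M] [Module B M] (hM : C.Mem M)
    (F : Finset B) (hF : (F : Set B) ⊆ E)
    (hsupp : ∀ m : M, (∑ e ∈ F, e) • m = m) :
    Module.Injective B M ↔ InjectiveIn C M := by
  classical
  constructor
  · intro hInj X Y _ _ _ _ _ _ f hf g
    exact hInj.out f hf g
  · intro hinj
    -- Part 1: the element `w`
    have hcomm' : (↑F : Set B).Pairwise fun a b => Commute ((1:B) - a) ((1:B) - b) := by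
      intro e he f hf' _
      have h : Commute e f := hcomm e (hF he) f (hF hf')
      exact (Commute.one_right _).sub_right ((Commute.one_left f).sub_left h)
    set p : B := F.noncommProd (fun e => 1 - e) hcomm' with hp
    set w : B := 1 - p with hwdef
    have hpe : ∀ e ∈ F, p * e = 0 := by
      intro e he
      rw [hp, ← Finset.noncommProd_erase_mul F he _ hcomm', mul_assoc, sub_mul, one_mul,
        hidem e (hF he), sub_self, mul_zero]
    have hpu : p * (∑ e ∈ F, e) = 0 := by
      rw [Finset.mul_sum]
      exact Finset.sum_eq_zero hpe
    have hwm : ∀ m : M, w • m = m := by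
      intro m
      have h1 : p • m = (0 : M) := by
        conv_lhs => rw [← hsupp m]
        rw [← mul_smul, hpu, zero_smul]
      rw [hwdef, sub_smul, one_smul, h1, sub_zero]
    have hwE : ∀ e ∈ E, e * w = w * e := by
      intro e he
      have hep : Commute e p := by
        refine Finset.noncommProd_commute _ _ _ _ (fun f hf' => ?_)
        exact (Commute.one_right e).sub_right (hcomm e he f (hF hf'))
      exact ((Commute.one_right e).sub_right hep).eq
    have hwa : w ∈ r B := by
      have key : ∀ s : Finset B, (↑s : Set B) ⊆ E →
          ∀ comm, (1 : B) - s.noncommProd (fun e => 1 - e) comm ∈ r B := by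
        intro s
        induction s using Finset.induction_on with
        | empty => intro _ comm; simp
        | @insert a s ha ih =>
          intro hsub comm
          rw [Finset.noncommProd_insert_of_notMem _ _ _ _ ha]
          set q : B := s.noncommProd (fun e => 1 - e)
            (comm.mono fun _ => Finset.mem_insert_of_mem) with hq
          have h1 : (1 : B) - q ∈ r B :=
            ih (fun x hx => hsub (Finset.mem_insert_of_mem hx)) _
          have h2 : a * q ∈ r B := by
            simpa [smul_eq_mul] using
              aux_smul_mem C r hmem hmax B q (hEa (hsub (Finset.mem_insert_self a s)))
          have h3 : (1 : B) - (1 - a) * q = ((1 : B) - q) + a * q := by noncomm_ring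
          rw [h3]
          exact (r B).add_mem h1 h2
      exact key F hF hcomm'
    -- Part 2: an injective extension of `M`
    let MM : ModuleCat.{u} B := ModuleCat.of B M
    let EE : ModuleCat.{u} B := CategoryTheory.Injective.under MM
    haveI hEEinj : CategoryTheory.Injective (ModuleCat.of B (↥EE)) :=
      inferInstanceAs (CategoryTheory.Injective EE)
    have hEinj : Module.Injective B (↥EE) :=
      Module.injective_module_of_injective_object B (↥EE)
    let j : M →ₗ[B] ↥EE := (CategoryTheory.Injective.ι MM).hom
    have hj : Function.Injective j :=
      (ModuleCat.mono_iff_injective (CategoryTheory.Injective.ι MM)).1 inferInstance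
    -- Part 3: maximal complement and essential quotient
    obtain ⟨N, hN⟩ := aux_zorn (B := B) (LinearMap.range j)
    let φ : M →ₗ[B] (↥EE ⧸ N) := N.mkQ.comp j
    have hφ : Function.Injective φ := by
      rw [injective_iff_map_eq_zero]
      intro m hm
      have h1 : j m ∈ N := by rwa [LinearMap.comp_apply, aux_mkQ_eq_zero] at hm
      have h2 : j m ∈ N ⊓ LinearMap.range j := Submodule.mem_inf.2 ⟨h1, ⟨m, rfl⟩⟩
      rw [hN.1] at h2
      have h3 : j m = 0 := by simpa using h2
      exact hj (by rw [h3, map_zero])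
    have hrange_eq : LinearMap.range φ = (LinearMap.range j).map N.mkQ :=
      LinearMap.range_comp _ _
    have ess := aux_essential (LinearMap.range j) hN
    -- Part 4: the image of `M` lands in `r (EE ⧸ N)`
    have hCrange : C.Mem (LinearMap.range φ) :=
      C.mem_congr (LinearEquiv.ofInjective φ hφ) hM
    have hrle : LinearMap.range φ ≤ r (↥EE ⧸ N) := hmax _ _ hCrange
    -- Part 5: retraction from `r (EE ⧸ N)` onto `M` by injectivity in `C`
    let f1 : M →ₗ[B] ↥(r (↥EE ⧸ N)) :=
      φ.codRestrict (r (↥EE ⧸ N)) (fun m => hrle ⟨m, rfl⟩)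
    have hf1 : Function.Injective f1 := fun a b h => hφ (congrArg Subtype.val h)
    obtain ⟨pr, hpr⟩ := hinj M (↥(r (↥EE ⧸ N))) hM (hmem _) f1 hf1 LinearMap.id
    -- Part 6: `r (EE ⧸ N)` equals the image of `M`
    have claimA : ∀ z : ↥EE ⧸ N, z ∈ r (↥EE ⧸ N) → z ∈ LinearMap.range φ := by
      intro z hz
      by_cases hd : z - φ (pr ⟨z, hz⟩) = 0
      · exact ⟨pr ⟨z, hz⟩, (sub_eq_zero.1 hd).symm⟩
      · exfalso
        have hdr : z - φ (pr ⟨z, hz⟩) ∈ r (↥EE ⧸ N) :=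
          Submodule.sub_mem _ hz (hrle ⟨_, rfl⟩)
        have hpd : pr ⟨z - φ (pr ⟨z, hz⟩), hdr⟩ = 0 := by
          have he : (⟨z - φ (pr ⟨z, hz⟩), hdr⟩ : ↥(r (↥EE ⧸ N)))
              = ⟨z, hz⟩ - f1 (pr ⟨z, hz⟩) := by
            apply Subtype.ext
            rfl
          rw [he, map_sub, hpr]
          simp
        obtain ⟨b, hb1, hb2⟩ := ess _ hd
        rw [← hrange_eq] at hb1
        obtain ⟨m0, hm0⟩ := hb1
        have hbd : b • (z - φ (pr ⟨z, hz⟩)) ∈ r (↥EE ⧸ N) := Submodule.smul_mem _ b hdr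
        have h1 : pr ⟨b • (z - φ (pr ⟨z, hz⟩)), hbd⟩ = 0 := by
          have he2 : (⟨b • (z - φ (pr ⟨z, hz⟩)), hbd⟩ : ↥(r (↥EE ⧸ N)))
              = b • ⟨z - φ (pr ⟨z, hz⟩), hdr⟩ := rfl
          rw [he2, map_smul, hpd, smul_zero]
        have h2 : (⟨b • (z - φ (pr ⟨z, hz⟩)), hbd⟩ : ↥(r (↥EE ⧸ N))) = f1 m0 :=
          Subtype.ext hm0.symm
        rw [h2, hpr] at h1
        apply hb2
        rw [← hm0]
        simp only [LinearMap.id_apply] at h1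
        rw [h1, map_zero]
    -- Part 7: the image of `M` is everything
    have habs : ∀ v, v ∈ LinearMap.range φ → w • v = v := by
      rintro v ⟨m, rfl⟩
      rw [← map_smul, hwm]
    have claimB : ∀ y : ↥EE ⧸ N, y ∈ LinearMap.range φ := by
      intro y
      have hwy : w • y ∈ r (↥EE ⧸ N) := aux_smul_mem C r hmem hmax _ y hwa
      by_cases hz : y - w • y = 0
      · have h4 : y = w • y := by rwa [sub_eq_zero] at hz
        rw [h4]
        exact claimA _ hwy
      · exfalso
        have hEy' : ∀ e ∈ E, e • (y - w • y) = 0 := by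
          intro e he
          have h1 : e • y ∈ LinearMap.range φ :=
            claimA _ (aux_smul_mem C r hmem hmax _ y (hEa he))
          have h2 : e • (y - w • y) = e • y - w • (e • y) := by
            rw [smul_sub, ← mul_smul, hwE e he, mul_smul]
          rw [h2, habs _ h1, sub_self]
        obtain ⟨b, hb1, hb2⟩ := ess _ hz
        rw [← hrange_eq] at hb1
        have h3 : w • (b • (y - w • y)) = b • (y - w • y) := habs _ hb1
        have hwb : w * b ∈ r B := by
          simpa [smul_eq_mul] using aux_smul_mem C r hmem hmax B b hwa
        obtain ⟨e, he, hxe, _⟩ := hlocal _ hwb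
        apply hb2
        calc b • (y - w • y) = (w * b) • (y - w • y) := by rw [mul_smul, h3]
          _ = ((w * b) * e) • (y - w • y) := by rw [hxe]
          _ = (w * b) • (e • (y - w • y)) := by rw [mul_smul]
          _ = 0 := by rw [hEy' e he, smul_zero]
    -- Part 8: retraction from `EE` and conclusion
    let eqv : M ≃ₗ[B] (↥EE ⧸ N) := LinearEquiv.ofBijective φ ⟨hφ, fun y => claimB y⟩
    let ρ : ↥EE →ₗ[B] M := (eqv.symm : (↥EE ⧸ N) →ₗ[B] M).comp N.mkQ
    have hρ : ∀ m : M, ρ (j m) = m := by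
      intro m
      show eqv.symm (N.mkQ (j m)) = m
      have h5 : N.mkQ (j m) = eqv m := rfl
      rw [h5, LinearEquiv.symm_apply_apply]
    refine ⟨fun X Y _ _ _ _ f hf g => ?_⟩
    obtain ⟨h', hh'⟩ := hEinj.out f hf (j.comp g)
    refine ⟨ρ.comp h', fun x => ?_⟩
    show ρ (h' (f x)) = g x
    rw [hh' x]
    exact hρ (g x)
end

section
/- Let (C, Δ, ε) be a coassociative counital K-coalgebra with C locally projective (hence projective-module-like dual pairing) over a commutative ring K, and let C* = Hom_K(C, K) be its convolution dual algebra. The set Rat(M) of rational elements of a left C*-module M — elements m for which there exist finitely many (c_i, m_i) ∈ C × M with x·m = Σ_i m_i·x(c_i) for all x ∈ C* — is a C*-submodule of M. -/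
/-!
Statement 13.  Let `C` be a coassociative counital coalgebra over a commutative ring
`K`, with `C` locally projective as a `K`-module, and let `C* = Hom_K(C, K)` be its
convolution dual algebra.  For a left `C*`-module `M`, the set `Rat M` of rational
elements of `M` — elements `m` for which there exist finitely many `(cᵢ, mᵢ) ∈ C × M`
with `x·m = ∑ᵢ x(cᵢ) • mᵢ` for all `x ∈ C*` — is a `C*`-submodule of `M`.
-/

universe u

open TensorProduct

variable {K : Type u} [CommRing K] {C : Type u} [AddCommGroup C] [Module K C]
  [Coalgebra K C]

/-- The convolution product on the dual `C* = Hom_K(C, K)` of a coalgebra. -/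
noncomputable def conv (x y : Module.Dual K C) : Module.Dual K C :=
  (TensorProduct.lid K K).toLinearMap ∘ₗ (TensorProduct.map x y) ∘ₗ Coalgebra.comul

variable {M : Type u} [AddCommGroup M] [Module K M]

/-- `m` is a rational element of a `C*`-module `(M, act)`. -/
def IsRational (act : Module.Dual K C →ₗ[K] M →ₗ[K] M) (m : M) : Prop :=
  ∃ (n : ℕ) (c : Fin n → C) (m' : Fin n → M),
    ∀ x : Module.Dual K C, act x m = ∑ i, x (c i) • m' i

lemma conv_apply_finset (x y : Module.Dual K C) (c : C) (S : Finset (C × C))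
    (h : (Coalgebra.comul (R := K) c) = ∑ p ∈ S, p.1 ⊗ₜ[K] p.2) :
    conv x y c = ∑ p ∈ S, x p.1 * y p.2 := by
  simp [conv, h, map_sum, smul_eq_mul]

theorem stmt13
    -- `C` is locally projective as a `K`-module:
    (hlp : ∀ (n : ℕ) (c : Fin n → C), ∃ (k : ℕ) (d : Fin k → C)
      (x : Fin k → Module.Dual K C), ∀ i, c i = ∑ l, x l (c i) • d l)
    -- `M` is a left `C*`-module for the convolution algebra `C*`:
    (act : Module.Dual K C →ₗ[K] M →ₗ[K] M)
    (hact_mul : ∀ x y : Module.Dual K C, act (conv x y) = (act x) ∘ₗ (act y))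
    (hact_one : act Coalgebra.counit = LinearMap.id) :
    -- the set of rational elements is a `C*`-submodule of `M`:
    ∃ S : Submodule K M, ((S : Set M) = {m : M | IsRational act m}) ∧
      ∀ (x : Module.Dual K C) (m : M), m ∈ S → act x m ∈ S := by
  classical
  refine ⟨{ carrier := {m | IsRational act m}
            add_mem' := ?_
            zero_mem' := ?_
            smul_mem' := ?_ }, rfl, ?_⟩
  · rintro a b ⟨n1, c1, m1, h1⟩ ⟨n2, c2, m2, h2⟩
    refine ⟨n1 + n2, Fin.append c1 c2, Fin.append m1 m2, fun x => ?_⟩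
    rw [map_add, Fin.sum_univ_add]
    simp [Fin.append_left, Fin.append_right, h1 x, h2 x]
  · exact ⟨0, ![], ![], fun x => by simp⟩
  · rintro k a ⟨n, c, m', h⟩
    refine ⟨n, c, fun i => k • m' i, fun x => ?_⟩
    rw [map_smul, h x, Finset.smul_sum]
    simp [smul_comm k]
  · rintro y m ⟨n, c, m', h⟩
    -- decompose each comul (c i) into a finite sum of pure tensors
    have hT : ∀ i : Fin n, ∃ S : Finset (C × C),
        (Coalgebra.comul (R := K) (c i)) = ∑ p ∈ S, p.1 ⊗ₜ[K] p.2 := fun i => by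
      obtain ⟨S, hS⟩ := TensorProduct.exists_finset (Coalgebra.comul (R := K) (c i))
      exact ⟨S, hS⟩
    choose T hTs using hT
    set S : Finset (C × C) := Finset.univ.biUnion T with hSdef
    obtain ⟨k, d, xl, hx⟩ := hlp S.card (fun j => ((S.equivFin.symm j : C × C)).1)
    have key : ∀ p ∈ S, p.1 = ∑ l, xl l p.1 • d l := by
      intro p hp
      have := hx (S.equivFin ⟨p, hp⟩)
      simpa using this
    -- pointwise identity for conv
    have hconv : ∀ (x : Module.Dual K C) (i : Fin n),
        conv x y (c i) = ∑ l, x (d l) * conv (xl l) y (c i) := by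
      intro x i
      have hsub : T i ⊆ S := Finset.subset_biUnion_of_mem T (Finset.mem_univ i)
      rw [conv_apply_finset x y (c i) (T i) (hTs i)]
      calc ∑ p ∈ T i, x p.1 * y p.2
          = ∑ p ∈ T i, (∑ l, xl l p.1 * x (d l)) * y p.2 := by
            refine Finset.sum_congr rfl fun p hp => ?_
            congr 1
            conv_lhs => rw [key p (hsub hp)]
            simp [smul_eq_mul]
        _ = ∑ l, x (d l) * ∑ p ∈ T i, xl l p.1 * y p.2 := by
            simp_rw [Finset.sum_mul, Finset.mul_sum]
            rw [Finset.sum_comm]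
            exact Finset.sum_congr rfl fun l _ => Finset.sum_congr rfl fun p _ => by ring
        _ = ∑ l, x (d l) * conv (xl l) y (c i) := by
            refine Finset.sum_congr rfl fun l _ => ?_
            rw [conv_apply_finset (xl l) y (c i) (T i) (hTs i)]
    refine ⟨k, d, fun l => ∑ i, conv (xl l) y (c i) • m' i, fun x => ?_⟩
    have : act x (act y m) = act (conv x y) m := by rw [hact_mul]; rfl
    rw [this, h (conv x y)]
    calc ∑ i, conv x y (c i) • m' i
        = ∑ i, ∑ l, (x (d l) * conv (xl l) y (c i)) • m' i := by
          refine Finset.sum_congr rfl fun i _ => ?_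
          rw [hconv x i, Finset.sum_smul]
      _ = ∑ l, x (d l) • ∑ i, conv (xl l) y (c i) • m' i := by
          rw [Finset.sum_comm]
          refine Finset.sum_congr rfl fun l _ => ?_
          rw [Finset.smul_sum]
          refine Finset.sum_congr rfl fun i _ => ?_
          rw [mul_smul]
end

section
/- Let a ⊆ B be an idempotent two-sided ideal with B/a flat as a left B-module. Then for every element u ∈ a and every b ∈ B there exists w ∈ a with (ub)w = ub; more generally, every element of a admits a right local unit in a. -/
/-!
Statement 15.  Let `a ⊆ B` be an idempotent two-sided ideal with `B/a` flat as a left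
`B`-module.  Then for every `u ∈ a` and every `b ∈ B` there exists `w ∈ a` with
`(u·b)·w = u·b`; more generally, every element of `a` admits a right local unit in
`a`.  Flatness over the possibly noncommutative ring `B` is expressed by the
equational criterion.
-/

universe u

theorem stmt15 {B : Type u} [Ring B] (a : Ideal B)
    -- `a` is two-sided:
    (h2 : ∀ x ∈ a, ∀ b : B, x * b ∈ a)
    -- `a` is idempotent:
    (hidem : Submodule.span B {z : B | ∃ u ∈ a, ∃ v ∈ a, z = u * v} = a)
    -- `B/a` is flat as a left `B`-module:
    (hflat : EquationallyFlat B (B ⧸ a)) :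
    (∀ u ∈ a, ∀ b : B, ∃ w ∈ a, (u * b) * w = u * b) ∧
      ∀ x ∈ a, ∃ w ∈ a, x * w = x := by
  have key : ∀ x ∈ a, ∃ w ∈ a, x * w = x := by
    intro x hx
    have h0 : (∑ i : Fin 1, (fun _ : Fin 1 => x) i •
        (fun _ : Fin 1 => (Submodule.Quotient.mk (1 : B) : B ⧸ a)) i) = 0 := by
      simp only [Fin.sum_univ_one]
      rw [← Submodule.Quotient.mk_smul, smul_eq_mul, mul_one,
        Submodule.Quotient.mk_eq_zero]
      exact hx
    obtain ⟨k, b, m', h1, hrel⟩ := hflat 1 _ _ h0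
    choose c hc using fun j => Submodule.Quotient.mk_surjective a (m' j)
    refine ⟨1 - ∑ j, b 0 j * c j, ?_, ?_⟩
    · have := h1 0
      simp only [← hc] at this
      have : (Submodule.Quotient.mk (1 : B) : B ⧸ a)
          = Submodule.Quotient.mk (∑ j, b 0 j * c j) := by
        rw [this]
        simp only [← Submodule.mkQ_apply, ← map_smul, smul_eq_mul, ← map_sum]
      exact (Submodule.Quotient.eq a).mp this
    · have hbz : ∀ j, x * b 0 j = 0 := by
        intro j
        have := hrel j
        simpa using this
      rw [mul_sub, mul_one, Finset.mul_sum]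
      have : ∑ j, x * (b 0 j * c j) = 0 := by
        apply Finset.sum_eq_zero
        intro j _
        rw [← mul_assoc, hbz j, zero_mul]
      rw [this, sub_zero]
  exact ⟨fun u hu b => key _ (h2 u hu b), key⟩
end
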